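/- arXiv:2407.13636 — 9 statements merged into one kernel-verified Lean document; each statement's English description precedes it below -/
import Mathlib

section
/- Let M ⊆ G with |M| = p^s and let U = Stab(M) be its stabilizer under the left-multiplication action of G on subsets. Then: (1) |[M]| · |U| = p^t·n; (2) there is a unique l ∈ [0, s] with |U| = p^{s−l}, M is a disjoint union of p^l right cosets U·m_1, …, U·m_{p^l} of U with m_i ∈ M, and the orbit of M has length |[M]| = p^{t−s+l}·n. -/
open Pointwise

/-- Orbit lengths and stabilizers for the action of `G` on its `p^s`-element subsets
by left multiplication. Let `|G| = p^t·n` with `p ∤ n`, `s ∈ [0, t]`, and `M ⊆ G`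
with `|M| = p^s`, and write `U := Stab(M)`. Then
(1) `|[M]| · |U| = p^t · n`;
(2) there is a unique `l ∈ [0, s]` with `|U| = p^(s-l)`; and for this `l`, `M` is a
disjoint union of `p^l` right cosets `U·m_i` with `m_i ∈ M`, and `|[M]| = p^(t-s+l)·n`. -/
theorem orbit_stabilizer_subsets {G : Type*} [Group G] [Finite G] (p t n s : ℕ)
    (hp : p.Prime) (hG : Nat.card G = p ^ t * n) (hn : ¬ p ∣ n) (hs : s ≤ t)
    (M : Set G) (hM : Nat.card M = p ^ s) :
    Nat.card (MulAction.orbit G M) * Nat.card (MulAction.stabilizer G M) = p ^ t * n ∧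
    (∃! l, l ≤ s ∧ Nat.card (MulAction.stabilizer G M) = p ^ (s - l)) ∧
    ∀ l, l ≤ s → Nat.card (MulAction.stabilizer G M) = p ^ (s - l) →
      (∃ m : Fin (p ^ l) → G, (∀ i, m i ∈ M) ∧
        (∀ i j, i ≠ j →
          Disjoint ((MulAction.stabilizer G M : Set G) * {m i})
            ((MulAction.stabilizer G M : Set G) * {m j})) ∧
        M = ⋃ i, (MulAction.stabilizer G M : Set G) * {m i}) ∧
      Nat.card (MulAction.orbit G M) = p ^ (t - s + l) * n := by
  classical
  set U := MulAction.stabilizer G M with hUdef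
  have hmemU : ∀ u : G, u ∈ U → ∀ m ∈ M, u * m ∈ M := by
    intro u hu m hm
    have h1 : u • M = M := hu
    have h2 := Set.smul_mem_smul_set (a := u) hm
    rwa [h1, smul_eq_mul] at h2
  let φ : M → G ⧸ (U : Subgroup G) := fun m => QuotientGroup.mk ((m : G)⁻¹)
  have hφ : ∀ x y : M, φ x = φ y ↔ (x : G) * (y : G)⁻¹ ∈ U := by
    intro x y
    simp only [φ, QuotientGroup.eq, inv_inv]
  let rep : Set.range φ → M := fun q => q.2.choose
  have hrep : ∀ q : Set.range φ, φ (rep q) = q := fun q => q.2.choose_spec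
  let F : Set.range φ × U → M := fun x =>
    ⟨(x.2 : G) * (rep x.1 : G), hmemU _ x.2.2 _ (rep x.1).2⟩
  have hFbij : Function.Bijective F := by
    constructor
    · rintro ⟨q, u⟩ ⟨q', u'⟩ h
      have h' : (u : G) * (rep q : G) = (u' : G) * (rep q' : G) := congrArg Subtype.val h
      have hq : q = q' := by
        have hm : (rep q : G) * (rep q' : G)⁻¹ ∈ U := by
          have heq : ((rep q : G) * (rep q' : G)⁻¹) = (u : G)⁻¹ * (u' : G) := by
            rw [eq_inv_mul_iff_mul_eq, ← mul_assoc, h', mul_assoc, mul_inv_cancel, mul_one]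
          rw [heq]
          exact U.mul_mem (U.inv_mem u.2) u'.2
        have := (hφ _ _).mpr hm
        rw [hrep q, hrep q'] at this
        exact Subtype.ext this
      subst hq
      have hu : (u : G) = (u' : G) := mul_right_cancel h'
      simp [Subtype.ext hu]
    · intro x
      have hq : φ x ∈ Set.range φ := ⟨x, rfl⟩
      have h1 : (rep ⟨φ x, hq⟩ : G) * (x : G)⁻¹ ∈ U := by
        have := hrep ⟨φ x, hq⟩
        exact (hφ _ _).mp this
      have h2 : (x : G) * (rep ⟨φ x, hq⟩ : G)⁻¹ ∈ U := by
        have := U.inv_mem h1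
        simpa [mul_inv_rev] using this
      refine ⟨⟨⟨φ x, hq⟩, ⟨(x : G) * (rep ⟨φ x, hq⟩ : G)⁻¹, h2⟩⟩, ?_⟩
      apply Subtype.ext
      simp [F, mul_assoc]
  have hcardEq : Nat.card (Set.range φ) * Nat.card U = p ^ s := by
    rw [← hM, ← Nat.card_prod]
    exact Nat.card_eq_of_bijective F hFbij
  have hUdvd : Nat.card U ∣ p ^ s := Dvd.intro_left _ hcardEq
  obtain ⟨k, hk, hUcard⟩ := (Nat.dvd_prime_pow hp).mp hUdvd
  have part1 : Nat.card (MulAction.orbit G M) * Nat.card U = p ^ t * n := by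
    rw [← hG, ← Nat.card_prod]
    exact Nat.card_congr (MulAction.orbitProdStabilizerEquivGroup G M)
  refine ⟨part1, ?_, ?_⟩
  · refine ⟨s - k, ⟨Nat.sub_le _ _, by rw [Nat.sub_sub_self hk, hUcard]⟩, ?_⟩
    rintro l ⟨hl, hcard⟩
    have hpow : s - l = k :=
      Nat.pow_right_injective hp.two_le (show p ^ (s - l) = p ^ k by rw [← hcard, hUcard])
    omega
  · intro l hl hcard
    have hppos : 0 < p := hp.pos
    have hrange : Nat.card (Set.range φ) = p ^ l := by
      have h2 : Nat.card (Set.range φ) * p ^ (s - l) = p ^ l * p ^ (s - l) := by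
        rw [← hcard, hcardEq, hcard, ← pow_add]
        congr 1
        omega
      exact Nat.eq_of_mul_eq_mul_right (by positivity) h2
    let e : Fin (p ^ l) ≃ Set.range φ :=
      ((Nat.equivFinOfCardPos (α := Set.range φ) (by rw [hrange]; positivity)).trans
        (finCongr hrange)).symm
    refine ⟨⟨fun i => (rep (e i) : G), fun i => (rep (e i)).2, ?_, ?_⟩, ?_⟩
    · intro i j hij
      rw [Set.disjoint_left]
      rintro x hx hx'
      rw [Set.mem_mul] at hx hx'
      obtain ⟨u, hu, a, ha, rfl⟩ := hx
      obtain ⟨u', hu', b, hb, hab⟩ := hx'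
      rw [Set.mem_singleton_iff] at ha hb
      subst ha hb
      have hm : (rep (e i) : G) * (rep (e j) : G)⁻¹ ∈ U := by
        have heq : (rep (e i) : G) * (rep (e j) : G)⁻¹ = u⁻¹ * u' := by
          rw [eq_inv_mul_iff_mul_eq, ← mul_assoc, ← hab, mul_assoc, mul_inv_cancel, mul_one]
        rw [heq]
        exact U.mul_mem (U.inv_mem hu) hu'
      have := (hφ _ _).mpr hm
      rw [hrep (e i), hrep (e j)] at this
      exact hij (e.injective (Subtype.ext this))
    · ext x
      simp only [Set.mem_iUnion]
      constructor
      · intro hx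
        have hq : φ ⟨x, hx⟩ ∈ Set.range φ := ⟨⟨x, hx⟩, rfl⟩
        refine ⟨e.symm ⟨φ ⟨x, hx⟩, hq⟩, ?_⟩
        have he : e (e.symm ⟨φ ⟨x, hx⟩, hq⟩) = ⟨φ ⟨x, hx⟩, hq⟩ := e.apply_symm_apply _
        rw [he]
        have h1 : (rep ⟨φ ⟨x, hx⟩, hq⟩ : G) * x⁻¹ ∈ U := by
          have h2 := hrep ⟨φ ⟨x, hx⟩, hq⟩
          exact (hφ _ ⟨x, hx⟩).mp h2
        have h3 : x * (rep ⟨φ ⟨x, hx⟩, hq⟩ : G)⁻¹ ∈ U := by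
          have := U.inv_mem h1
          simpa [mul_inv_rev] using this
        rw [Set.mem_mul]
        exact ⟨_, h3, _, Set.mem_singleton _, by group⟩
      · rintro ⟨i, hi⟩
        rw [Set.mem_mul] at hi
        obtain ⟨u, hu, a, ha, rfl⟩ := hi
        rw [Set.mem_singleton_iff] at ha
        subst ha
        exact hmemU _ hu _ (rep (e i)).2
    · have key : p ^ (t - s + l) * n * p ^ (s - l) = p ^ t * n := by
        rw [mul_right_comm, ← pow_add]
        congr 2
        omega
      have h3 := part1
      rw [hcard] at h3
      exact Nat.eq_of_mul_eq_mul_right (show 0 < p ^ (s - l) by positivity)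
        (by rw [key]; exact h3)
end

section
/- Wielandt's lemma, part 1: if M ⊆ G with |M| = p^s has stabilizer of order p^s (equivalently, orbit of length p^{t−s}·n), then the orbit [M] contains exactly one element H with H a subgroup of G. -/
open Pointwise

/-- **Wielandt's lemma, part 1.** Let `|G| = p^t·n` with `p ∤ n` and `s ∈ [0, t]`.
If `M ⊆ G` with `|M| = p^s` has stabilizer of order `p^s` (under the action of `G`
on subsets by left multiplication), then the orbit `[M]` contains exactly one
element `H` that is a subgroup of `G`. -/
theorem wielandt_lemma_one {G : Type*} [Group G] [Finite G] (p t n s : ℕ)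
    (hp : p.Prime) (hG : Nat.card G = p ^ t * n) (hn : ¬ p ∣ n) (hs : s ≤ t)
    (M : Set G) (hM : Nat.card M = p ^ s)
    (hstab : Nat.card (MulAction.stabilizer G M) = p ^ s) :
    ∃! H : Set G, H ∈ MulAction.orbit G M ∧ ∃ K : Subgroup G, H = (K : Set G) := by
  classical
  set S := MulAction.stabilizer G M with hS
  have hMne : M.Nonempty := by
    rw [Set.nonempty_iff_ne_empty]
    rintro rfl
    have h0 : Nat.card ((∅ : Set G)) = 0 := by simp
    rw [h0] at hM
    exact (pow_ne_zero s hp.pos.ne') hM.symm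
  obtain ⟨m, hm⟩ := hMne
  have key : (fun h : G => h * m) '' (S : Set G) = M := by
    apply Set.eq_of_subset_of_ncard_le
    · rintro x ⟨h, hh, rfl⟩
      have hhM : h • M = M := hh
      rw [← hhM]
      exact ⟨m, hm, rfl⟩
    · rw [Set.ncard_image_of_injective _ (mul_left_injective m),
        ← Nat.card_coe_set_eq, ← Nat.card_coe_set_eq, hM]
      have : Nat.card ((S : Set G)) = p ^ s := hstab
      rw [this]
    · exact Set.toFinite M
  have hset : m⁻¹ • M = ((S.map (MulAut.conj m⁻¹).toMonoidHom : Subgroup G) : Set G) := by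
    ext x
    simp only [Subgroup.coe_map, MulEquiv.coe_toMonoidHom, MulAut.conj_apply,
      Set.mem_image, Set.mem_smul_set, ← key, SetLike.mem_coe]
    constructor
    · rintro ⟨y, ⟨h, hh, rfl⟩, rfl⟩
      exact ⟨h, hh, by simp [smul_eq_mul, mul_assoc]⟩
    · rintro ⟨h, hh, rfl⟩
      exact ⟨h * m, ⟨h, hh, rfl⟩, by simp [smul_eq_mul, mul_assoc]⟩
  refine ⟨m⁻¹ • M, ⟨⟨m⁻¹, rfl⟩, _, hset⟩, ?_⟩
  rintro H' ⟨horb, K', rfl⟩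
  obtain ⟨g, hg⟩ := horb
  have hone : (1 : G) ∈ m⁻¹ • M := ⟨m, hm, inv_mul_cancel m⟩
  have hc : (g * m) • (m⁻¹ • M) = (K' : Set G) := by
    rw [smul_smul, mul_assoc, mul_inv_cancel, mul_one]; exact hg
  have hcK : g * m ∈ K' := by
    show g * m ∈ (K' : Set G)
    rw [← hc]
    exact ⟨1, hone, mul_one _⟩
  calc (K' : Set G) = (g * m) • (m⁻¹ • M) := hc.symm
    _ = m⁻¹ • M := by
        have := smul_coe_set (s := K') hcK
        rw [← hc] at this
        -- this : (g*m) • ((g*m) • (m⁻¹ • M)) = (g*m) • (m⁻¹ • M)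
        exact smul_left_cancel _ this
end

section
/- Wielandt's lemma, part 2: if M ⊆ G with |M| = p^s has stabilizer of order p^{s−l} for some l ∈ [1, s] (equivalently, orbit of length p^{t−s+l}·n with l ≥ 1), then M is not a subgroup of G. -/
open Pointwise

/-- **Wielandt's lemma, part 2.** Let `|G| = p^t·n` with `p ∤ n` and `s ∈ [0, t]`.
If `M ⊆ G` with `|M| = p^s` has stabilizer of order `p^(s-l)` for some `l ∈ [1, s]`
(under the action of `G` on subsets by left multiplication), then `M` is not a
subgroup of `G`. -/
theorem wielandt_lemma_two {G : Type*} [Group G] [Finite G] (p t n s : ℕ)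
    (hp : p.Prime) (hG : Nat.card G = p ^ t * n) (hn : ¬ p ∣ n) (hs : s ≤ t)
    (M : Set G) (hM : Nat.card M = p ^ s) (l : ℕ) (hl1 : 1 ≤ l) (hls : l ≤ s)
    (hstab : Nat.card (MulAction.stabilizer G M) = p ^ (s - l)) :
    ¬ ∃ K : Subgroup G, M = (K : Set G) := by
  rintro ⟨K, rfl⟩
  have hstabK : MulAction.stabilizer G ((K : Set G)) = K := by
    ext g
    simp only [MulAction.mem_stabilizer_iff]
    constructor
    · intro h
      have : g • (1 : G) ∈ g • (K : Set G) := Set.smul_mem_smul_set K.one_mem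
      rw [h] at this
      simpa using this
    · intro hg
      ext x
      constructor
      · rintro ⟨y, hy, rfl⟩
        exact K.mul_mem hg hy
      · intro hx
        exact ⟨g⁻¹ * x, K.mul_mem (K.inv_mem hg) hx, by simp⟩
  rw [hstabK] at hstab
  rw [show Nat.card K = Nat.card (K : Set G) from rfl, hM] at hstab
  have := Nat.pow_right_injective hp.two_le hstab
  omega
end

section
/- For every l ∈ [1, s] the binomial congruence b(l) ≡ b(l−1) (mod p^l) holds, i.e. C(p^{t−s+l}·n − 1, p^l − 1) ≡ C(p^{t−s+l−1}·n − 1, p^{l−1} − 1) (mod p^l). -/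
open Finset
open scoped Nat

/-- Auxiliary congruence: `C(pM-1, pK-1) ≡ C(M-1, K-1) (mod pK)` under suitable
hypotheses, proved by the classical product-splitting argument. -/
theorem binom_aux (p M K : ℕ) (hp : p.Prime) (hK1 : 1 ≤ K) (hKM : K ≤ M)
    (hdvd : p * K ∣ p * M) (hKpow : ∃ a : ℕ, K = p ^ a)
    (hsgn : ((-1 : ZMod (p * K))) ^ (p * K - K) = 1) :
    Nat.choose (p * M - 1) (p * K - 1) ≡ Nat.choose (M - 1) (K - 1) [MOD p * K] := by
  have hp2 : 2 ≤ p := hp.two_le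
  have hpK1 : 1 ≤ p * K := Nat.mul_pos (by omega) hK1
  have hKpK : K ≤ p * K := Nat.le_mul_of_pos_left K (by omega)
  set S : Finset ℕ := (Ico 1 (p * K)).filter (fun j => ¬ p ∣ j) with hS
  set U : ℕ := ∏ j ∈ S, j with hU
  set V : ℕ := ∏ j ∈ S, (p * M - j) with hV
  -- the multiples of p in `Ico 1 (p*K)` are the image of `Ico 1 K` under `p * ·`
  have hinj : Function.Injective (fun i : ℕ => p * i) := fun x y h => by
    simpa using Nat.eq_of_mul_eq_mul_left (by omega : 0 < p) h
  have himg : (Ico 1 (p * K)).filter (fun j => p ∣ j) = (Ico 1 K).image (fun i => p * i) := by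
    ext j
    simp only [mem_filter, mem_Ico, mem_image]
    constructor
    · rintro ⟨⟨h1, h2⟩, c, rfl⟩
      refine ⟨c, ⟨Nat.pos_of_ne_zero fun h => by subst h; simp at h1, ?_⟩, rfl⟩
      exact lt_of_mul_lt_mul_left h2 (Nat.zero_le p)
    · rintro ⟨c, ⟨hc1, hc2⟩, rfl⟩
      exact ⟨⟨Nat.mul_pos (by omega) hc1, (mul_lt_mul_iff_right₀ (by omega : 0 < p)).mpr hc2⟩,
        dvd_mul_right p c⟩
  have hmult : ∀ f : ℕ → ℕ,
      ∏ j ∈ (Ico 1 (p * K)).filter (fun j => p ∣ j), f j = ∏ i ∈ Ico 1 K, f (p * i) := by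
    intro f
    rw [himg, prod_image (fun a _ b _ h => hinj h)]
  have hcarddvd : ((Ico 1 (p * K)).filter (fun j => p ∣ j)).card = K - 1 := by
    rw [himg, card_image_of_injective _ hinj, Nat.card_Ico]
  have hdesc : ∀ m r : ℕ, ∏ j ∈ Ico 1 r, (m - j) = (m - 1).descFactorial (r - 1) := by
    intro m r
    rw [Nat.descFactorial_eq_prod_range, prod_Ico_eq_prod_range]
    exact prod_congr rfl fun i _ => by omega
  have hfact : ∀ r : ℕ, 1 ≤ r → ∏ j ∈ Ico 1 r, j = (r - 1) ! := by
    intro r hr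
    obtain ⟨r', rfl⟩ : ∃ r', r = r' + 1 := ⟨r - 1, by omega⟩
    simp [prod_Ico_id_eq_factorial r']
  have hsplit : ∀ f : ℕ → ℕ,
      (∏ j ∈ (Ico 1 (p * K)).filter (fun j => p ∣ j), f j) * (∏ j ∈ S, f j)
        = ∏ j ∈ Ico 1 (p * K), f j := fun f => prod_filter_mul_prod_filter_not _ _ f
  have e1 : (p * K - 1) ! = p ^ (K - 1) * (K - 1) ! * U := by
    calc (p * K - 1) ! = ∏ j ∈ Ico 1 (p * K), j := (hfact (p * K) hpK1).symm
      _ = (∏ j ∈ (Ico 1 (p * K)).filter (fun j => p ∣ j), j) * U := (hsplit _).symm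
      _ = (∏ i ∈ Ico 1 K, p * i) * U := by rw [hmult]
      _ = (p ^ (K - 1) * ∏ i ∈ Ico 1 K, i) * U := by
          rw [Finset.prod_mul_distrib, Finset.prod_const, Nat.card_Ico]
      _ = p ^ (K - 1) * (K - 1) ! * U := by rw [hfact K hK1]
  have e2 : ∏ j ∈ Ico 1 (p * K), (p * M - j)
      = p ^ (K - 1) * (M - 1).descFactorial (K - 1) * V := by
    calc ∏ j ∈ Ico 1 (p * K), (p * M - j)
        = (∏ j ∈ (Ico 1 (p * K)).filter (fun j => p ∣ j), (p * M - j)) * V := (hsplit _).symm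
      _ = (∏ i ∈ Ico 1 K, (p * M - p * i)) * V := by rw [hmult]
      _ = (∏ i ∈ Ico 1 K, p * (M - i)) * V := by
          refine congrArg (· * V) (prod_congr rfl fun i _ => (Nat.mul_sub p M i).symm)
      _ = (p ^ (K - 1) * ∏ i ∈ Ico 1 K, (M - i)) * V := by
          rw [Finset.prod_mul_distrib, Finset.prod_const, Nat.card_Ico]
      _ = p ^ (K - 1) * (M - 1).descFactorial (K - 1) * V := by rw [hdesc M K]
  have key : Nat.choose (p * M - 1) (p * K - 1) * U = Nat.choose (M - 1) (K - 1) * V := by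
    have h5 : p ^ (K - 1) * (K - 1) ! * (Nat.choose (p * M - 1) (p * K - 1) * U)
        = p ^ (K - 1) * (K - 1) ! * (Nat.choose (M - 1) (K - 1) * V) := by
      calc p ^ (K - 1) * (K - 1) ! * (Nat.choose (p * M - 1) (p * K - 1) * U)
          = (p ^ (K - 1) * (K - 1) ! * U) * Nat.choose (p * M - 1) (p * K - 1) := by ring
        _ = (p * K - 1) ! * Nat.choose (p * M - 1) (p * K - 1) := by rw [← e1]
        _ = (p * M - 1).descFactorial (p * K - 1) :=
            (Nat.descFactorial_eq_factorial_mul_choose _ _).symm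
        _ = ∏ j ∈ Ico 1 (p * K), (p * M - j) := (hdesc (p * M) (p * K)).symm
        _ = p ^ (K - 1) * (M - 1).descFactorial (K - 1) * V := e2
        _ = p ^ (K - 1) * ((K - 1) ! * Nat.choose (M - 1) (K - 1)) * V := by
            rw [Nat.descFactorial_eq_factorial_mul_choose]
        _ = p ^ (K - 1) * (K - 1) ! * (Nat.choose (M - 1) (K - 1) * V) := by ring
    exact Nat.eq_of_mul_eq_mul_left
      (Nat.mul_pos (Nat.pow_pos (by omega)) (Nat.factorial_pos _)) h5
  -- pass to `ZMod (p*K)`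
  have hMlarge : p * K ≤ p * M := Nat.mul_le_mul_left p hKM
  have hc : S.card = p * K - K := by
    have h := card_filter_add_card_filter_not (s := Ico 1 (p * K))
      (p := fun j => p ∣ j)
    rw [Nat.card_Ico, hcarddvd] at h
    rw [← hS] at h
    generalize hq : p * K = q at h hKpK ⊢
    omega
  have hVcast : (V : ZMod (p * K)) = (-1) ^ (p * K - K) * (U : ZMod (p * K)) := by
    calc (V : ZMod (p * K)) = ∏ j ∈ S, ((p * M - j : ℕ) : ZMod (p * K)) := Nat.cast_prod _ _
      _ = ∏ j ∈ S, (-1 * (j : ZMod (p * K))) := by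
          refine prod_congr rfl fun j hj => ?_
          have hj' : j ≤ p * M :=
            le_trans (le_of_lt (mem_Ico.mp (mem_filter.mp hj).1).2) hMlarge
          rw [Nat.cast_sub hj', (ZMod.natCast_eq_zero_iff _ _).mpr hdvd, zero_sub,
            neg_one_mul]
      _ = (-1) ^ S.card * ∏ j ∈ S, (j : ZMod (p * K)) := by
          rw [Finset.prod_mul_distrib, Finset.prod_const]
      _ = (-1) ^ (p * K - K) * (U : ZMod (p * K)) := by rw [hc, hU, Nat.cast_prod]
  have hpU : ¬ p ∣ U := by
    intro h
    obtain ⟨j, hj, hpj⟩ := (hp.prime.dvd_finset_prod_iff _).mp h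
    exact (mem_filter.mp hj).2 hpj
  have hcop : Nat.Coprime U (p * K) := by
    obtain ⟨a, rfl⟩ := hKpow
    have h1 : Nat.Coprime U p := (hp.coprime_iff_not_dvd.mpr hpU).symm
    have := (h1.pow_right (a + 1))
    rwa [pow_succ'] at this
  have hUunit : IsUnit (U : ZMod (p * K)) := (ZMod.isUnit_iff_coprime U (p * K)).mpr hcop
  have hfin : ((Nat.choose (p * M - 1) (p * K - 1) : ℕ) : ZMod (p * K))
      = ((Nat.choose (M - 1) (K - 1) : ℕ) : ZMod (p * K)) := by
    have h := congrArg (fun x : ℕ => (x : ZMod (p * K))) key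
    push_cast at h
    rw [hVcast, hsgn, one_mul] at h
    exact hUunit.mul_right_cancel h
  exact (ZMod.natCast_eq_natCast_iff _ _ _).mp hfin

/-- The binomial congruence `b(l) ≡ b(l-1) (mod p^l)`, where
`b(l) = C(p^(t-s+l)·n - 1, p^l - 1)`: for a prime `p`, `p ∤ n`, `n ≥ 1`,
`s ∈ [0, t]` and `l ∈ [1, s]` one has
`C(p^(t-s+l)·n - 1, p^l - 1) ≡ C(p^(t-s+(l-1))·n - 1, p^(l-1) - 1) (mod p^l)`. -/
theorem binom_coeff_congruence (p t n s l : ℕ) (hp : p.Prime) (hn1 : 1 ≤ n)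
    (hn : ¬ p ∣ n) (hs : s ≤ t) (hl1 : 1 ≤ l) (hls : l ≤ s) :
    Nat.choose (p ^ (t - s + l) * n - 1) (p ^ l - 1)
      ≡ Nat.choose (p ^ (t - s + (l - 1)) * n - 1) (p ^ (l - 1) - 1) [MOD p ^ l] := by
  have hp2 : 2 ≤ p := hp.two_le
  have hsgn0 : ((-1 : ZMod (p ^ l))) ^ (p ^ l - p ^ (l - 1)) = 1 := by
    rcases eq_or_ne p 2 with rfl | hodd
    · rcases eq_or_ne l 1 with rfl | hl2
      · decide
      · have e : (2 : ℕ) ^ l = 2 * 2 ^ (l - 1) := by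
          conv_lhs => rw [← Nat.sub_add_cancel hl1]
          rw [pow_succ']
        have h2 : (2 : ℕ) ^ l - 2 ^ (l - 1) = 2 ^ (l - 1) := by omega
        rw [h2]
        exact Even.neg_one_pow (Nat.even_pow.mpr ⟨even_two, by omega⟩)
    · exact Even.neg_one_pow
        (Nat.Odd.sub_odd ((hp.odd_of_ne_two hodd).pow) ((hp.odd_of_ne_two hodd).pow))
  set a := t - s + (l - 1) with ha
  set K := p ^ (l - 1) with hK
  set M := p ^ a * n with hM
  have h1 : t - s + l = a + 1 := by omega
  have hlK : p ^ l = p * K := by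
    conv_lhs => rw [← Nat.sub_add_cancel hl1]
    rw [pow_succ', ← hK]
  have hpM : p ^ (t - s + l) * n = p * M := by
    rw [h1, pow_succ', mul_assoc, ← hM]
  rw [hlK, hpM]
  have hK1 : 1 ≤ K := by rw [hK]; exact Nat.one_le_pow _ _ (by omega)
  have hKM : K ≤ M := by
    rw [hK, hM]
    calc p ^ (l - 1) ≤ p ^ a := Nat.pow_le_pow_right (by omega) (by omega)
      _ ≤ p ^ a * n := Nat.le_mul_of_pos_right _ (by omega)
  have hdvd : p * K ∣ p * M := by
    rw [← hlK, ← hpM]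
    exact dvd_mul_of_dvd_left (pow_dvd_pow p (by omega)) n
  rw [hlK] at hsgn0
  exact binom_aux p M K hp hK1 hKM hdvd ⟨l - 1, hK⟩ hsgn0
end

section
/- One has C(p^t·n, p^s) = p^{t−s}·n · Σ_{k ∈ [0, s]} a_k·p^k, where a_k is the number of G-orbits of length p^{t−s+k}·n on the set of p^s-element subsets of G. In particular p^{t−s}·n divides C(p^t·n, p^s). -/
open Pointwise

/-- `orbitCount G p s t n k` is the number `a_k` of orbits of length `p^(t-s+k)·n`
of the action of `G` on its `p^s`-element subsets by left multiplication. -/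
noncomputable def orbitCount (G : Type*) [Group G] (p s t n k : ℕ) : ℕ :=
  Nat.card {O : Set (Set G) //
    (∃ M : Set G, Nat.card M = p ^ s ∧ O = MulAction.orbit G M) ∧
    Nat.card O = p ^ (t - s + k) * n}


private lemma natCardSigma {ι : Type*} [Fintype ι] (f : ι → Type*) [∀ i, Finite (f i)] :
    Nat.card (Σ i, f i) = ∑ i, Nat.card (f i) := by
  letI := fun i => Fintype.ofFinite (f i)
  rw [Nat.card_eq_fintype_card, Fintype.card_sigma]
  exact Finset.sum_congr rfl fun i _ => (Nat.card_eq_fintype_card).symm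

private lemma cardStabilizerDvd {G : Type*} [Group G] [Finite G] (M : Set G) :
    Nat.card (MulAction.stabilizer G M) ∣ Nat.card M := by
  classical
  set H := MulAction.stabilizer G M with hHdef
  letI : SMul H M := ⟨fun h m => ⟨h.1 • m.1, by
    have h2 : h.1 • M = M := h.2
    have h3 : h.1 • m.1 ∈ h.1 • M := Set.smul_mem_smul_set m.2
    rwa [h2] at h3⟩⟩
  letI : MulAction H M :=
    { one_smul := fun m => Subtype.ext (one_smul G m.1)
      mul_smul := fun a b m => Subtype.ext (mul_smul a.1 b.1 m.1) }
  have horb : ∀ m : M, Nat.card (MulAction.orbit H m) = Nat.card H := by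
    intro m
    have hst : MulAction.stabilizer H m = ⊥ := by
      ext h
      simp only [MulAction.mem_stabilizer_iff, Subgroup.mem_bot]
      constructor
      · intro hh
        have h1 : h.1 * m.1 = m.1 := congrArg Subtype.val hh
        exact Subtype.ext (mul_eq_right.mp h1)
      · rintro rfl; exact one_smul _ m
    rw [Nat.card_congr (MulAction.orbitEquivQuotientStabilizer H m), hst,
      Nat.card_congr (QuotientGroup.quotientBot (G := H)).toEquiv]
  letI : Fintype (MulAction.orbitRel.Quotient H M) := Fintype.ofFinite _
  have hM := Nat.card_congr (MulAction.selfEquivSigmaOrbits H M)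
  rw [natCardSigma] at hM
  refine Dvd.intro (Fintype.card (MulAction.orbitRel.Quotient H M)) ?_
  rw [hM, Finset.sum_congr rfl fun ω _ => horb ω.out, Finset.sum_const,
    Finset.card_univ, smul_eq_mul, mul_comm]

private lemma orbitCardEq {G : Type*} [Group G] [Finite G] {p t n s : ℕ} (hp : p.Prime)
    (hG : Nat.card G = p ^ t * n) (hs : s ≤ t) (M : Set G)
    (hM : Nat.card M = p ^ s) :
    ∃ k ≤ s, Nat.card (MulAction.orbit G M) = p ^ (t - s + k) * n := by
  classical
  have hdvd : Nat.card (MulAction.stabilizer G M) ∣ p ^ s := hM ▸ cardStabilizerDvd M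
  obtain ⟨j, hj, hHcard⟩ := (Nat.dvd_prime_pow hp).mp hdvd
  letI : Fintype G := Fintype.ofFinite G
  letI : Fintype (MulAction.orbit G M) := Fintype.ofFinite _
  letI : Fintype (MulAction.stabilizer G M) := Fintype.ofFinite _
  have hos := MulAction.card_orbit_mul_card_stabilizer_eq_card_group G M
  rw [← Nat.card_eq_fintype_card, ← Nat.card_eq_fintype_card, ← Nat.card_eq_fintype_card,
    hHcard, hG] at hos
  refine ⟨s - j, Nat.sub_le s j, ?_⟩
  have ht : t - s + (s - j) = t - j := by omega
  rw [ht]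
  have h2 : p ^ (t - j) * n * p ^ j = p ^ t * n := by
    rw [mul_right_comm, ← pow_add]
    have : t - j + j = t := by omega
    rw [this]
  exact Nat.eq_of_mul_eq_mul_right (pow_pos hp.pos j) (by rw [hos, h2])

/-- Counting the `p^s`-element subsets of `G` orbitwise:
`C(p^t·n, p^s) = p^(t-s)·n · ∑_{k ∈ [0,s]} a_k·p^k`, where `a_k` is the number of
orbits of length `p^(t-s+k)·n`.  In particular `p^(t-s)·n ∣ C(p^t·n, p^s)`. -/
theorem choose_eq_orbit_count_sum {G : Type*} [Group G] [Finite G] (p t n s : ℕ)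
    (hp : p.Prime) (hG : Nat.card G = p ^ t * n) (hn : ¬ p ∣ n) (hs : s ≤ t) :
    Nat.choose (p ^ t * n) (p ^ s)
        = p ^ (t - s) * n * ∑ k ∈ Finset.range (s + 1), orbitCount G p s t n k * p ^ k ∧
      p ^ (t - s) * n ∣ Nat.choose (p ^ t * n) (p ^ s) := by
  classical
  have hn0 : n ≠ 0 := fun h => hn (h ▸ dvd_zero p)
  letI : Fintype G := Fintype.ofFinite G
  letI : Fintype (Set (Set G)) := Fintype.ofFinite _
  let P : Set (Set G) → Prop := fun O => ∃ M : Set G, Nat.card M = p ^ s ∧ O = MulAction.orbit G M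
  let κ : Set (Set G) → ℕ := fun O => (Nat.card O).factorization p - (t - s)
  have hfac : ∀ k : ℕ, ((p ^ (t - s + k) * n)).factorization p = t - s + k := by
    intro k
    rw [Nat.factorization_mul (pow_ne_zero _ hp.pos.ne') hn0, Finsupp.add_apply,
      hp.factorization_pow, Finsupp.single_eq_same,
      Nat.factorization_eq_zero_of_not_dvd hn, add_zero]
  have hκval : ∀ (O : Set (Set G)) (k : ℕ), Nat.card O = p ^ (t - s + k) * n → κ O = k := by
    intro O k h
    simp only [κ, h, hfac k]
    omega
  have hPk : ∀ O, P O → ∃ k ≤ s, Nat.card O = p ^ (t - s + k) * n ∧ κ O = k := by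
    rintro O ⟨M, hM, rfl⟩
    obtain ⟨k, hk, hcard⟩ := orbitCardEq hp hG hs M hM
    exact ⟨k, hk, hcard, hκval _ k hcard⟩
  let Ω' := {M : Set G // Nat.card M = p ^ s}
  let f : Ω' → Set (Set G) := fun M => MulAction.orbit G M.1
  have h1 : Nat.card Ω' = (p ^ t * n).choose (p ^ s) := by
    have e : {A : Finset G // A.card = p ^ s} ≃ Ω' :=
      Equiv.subtypeEquiv Fintype.finsetEquivSet fun A => by
        rw [show (Fintype.finsetEquivSet A : Set G) = ↑A from rfl,
          Nat.card_coe_set_eq, Set.ncard_coe_finset]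
    rw [← Nat.card_congr e, Nat.card_eq_fintype_card, Fintype.card_finset_len,
      ← Nat.card_eq_fintype_card, hG]
  have h2 : Nat.card Ω' = ∑ O : Set (Set G), Nat.card {M : Ω' // f M = O} :=
    calc Nat.card Ω' = Nat.card (Σ O : Set (Set G), {M : Ω' // f M = O}) :=
          Nat.card_congr (Equiv.sigmaFiberEquiv f).symm
      _ = _ := natCardSigma _
  have h3 : ∀ O : Set (Set G), P O → Nat.card {M : Ω' // f M = O} = Nat.card O := by
    rintro O ⟨M₀, hM₀, rfl⟩
    refine Nat.card_congr (Equiv.ofBijective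
      (fun M => ⟨M.1.1, by
        have h : M.1.1 ∈ MulAction.orbit G (M.1.1 : Set G) := MulAction.mem_orbit_self _
        rwa [show MulAction.orbit G (M.1.1 : Set G) = f M.1 from rfl, M.2] at h⟩) ⟨?_, ?_⟩)
    · intro a b hab
      simp only [Subtype.mk.injEq] at hab
      exact Subtype.ext (Subtype.ext hab)
    · rintro ⟨N, hN⟩
      obtain ⟨g, rfl⟩ := MulAction.mem_orbit_iff.mp hN
      have hcard : Nat.card (g • M₀ : Set G) = p ^ s := by
        rw [Nat.card_coe_set_eq, Set.ncard_smul_set, ← Nat.card_coe_set_eq, hM₀]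
      exact ⟨⟨⟨g • M₀, hcard⟩, MulAction.orbit_smul g M₀⟩, rfl⟩
  have hcount : ∀ k : ℕ,
      orbitCount G p s t n k = ((Finset.univ.filter P).filter (fun O => κ O = k)).card := by
    intro k
    rw [Finset.filter_filter, orbitCount, Nat.card_eq_fintype_card, Fintype.card_subtype]
    congr 1
    apply Finset.filter_congr
    intro O _
    constructor
    · rintro ⟨hPO, hc⟩
      exact ⟨hPO, hκval O k hc⟩
    · rintro ⟨hPO, hκO⟩
      refine ⟨hPO, ?_⟩
      obtain ⟨k', _, hcard, hκ'⟩ := hPk O hPO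
      rw [hcard, ← hκ', hκO]
  have key : (p ^ t * n).choose (p ^ s)
      = ∑ k ∈ Finset.range (s + 1), orbitCount G p s t n k * (p ^ (t - s + k) * n) := by
    rw [← h1, h2]
    calc ∑ O : Set (Set G), Nat.card {M : Ω' // f M = O}
        = ∑ O ∈ Finset.univ.filter P, Nat.card {M : Ω' // f M = O} := by
          refine (Finset.sum_filter_of_ne fun O _ hne => ?_).symm
          obtain ⟨M⟩ := (Nat.card_ne_zero.mp hne).1
          exact ⟨M.1.1, M.1.2, M.2.symm⟩
      _ = ∑ O ∈ Finset.univ.filter P, Nat.card O :=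
          Finset.sum_congr rfl fun O hO => h3 O (Finset.mem_filter.mp hO).2
      _ = ∑ k ∈ Finset.range (s + 1),
            ∑ O ∈ (Finset.univ.filter P).filter (fun O => κ O = k), Nat.card O := by
          refine (Finset.sum_fiberwise_of_maps_to (fun O hO => ?_) _).symm
          obtain ⟨k, hk, _, hκO⟩ := hPk O (Finset.mem_filter.mp hO).2
          exact Finset.mem_range.mpr (by omega : κ O < s + 1)
      _ = ∑ k ∈ Finset.range (s + 1), orbitCount G p s t n k * (p ^ (t - s + k) * n) := by
          refine Finset.sum_congr rfl fun k _ => ?_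
          calc ∑ O ∈ (Finset.univ.filter P).filter (fun O => κ O = k), Nat.card O
              = ∑ _O ∈ (Finset.univ.filter P).filter (fun O => κ O = k), (p ^ (t - s + k) * n) := by
                refine Finset.sum_congr rfl fun O hO => ?_
                obtain ⟨hO1, hκO⟩ := Finset.mem_filter.mp hO
                obtain ⟨k', _, hcard, hκ'⟩ := hPk O (Finset.mem_filter.mp hO1).2
                rw [hcard, ← hκ', hκO]
            _ = ((Finset.univ.filter P).filter (fun O => κ O = k)).card * (p ^ (t - s + k) * n) := by
                rw [Finset.sum_const, smul_eq_mul]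
            _ = orbitCount G p s t n k * (p ^ (t - s + k) * n) := by rw [hcount k]
  have eq12 : (p ^ t * n).choose (p ^ s)
      = p ^ (t - s) * n * ∑ k ∈ Finset.range (s + 1), orbitCount G p s t n k * p ^ k := by
    rw [key, Finset.mul_sum]
    refine Finset.sum_congr rfl fun k _ => ?_
    rw [pow_add]
    ring
  exact ⟨eq12, eq12 ▸ dvd_mul_right _ _⟩
end

section
/- If M ⊆ G satisfies 1 ∈ M, |M| = p^s and |Stab(M)| = p^s, then M is a subgroup of G; in fact M = Stab(M). Consequently, for l ∈ [0, s], the number of pairs (U, M), where U ≤ G is a subgroup with |U| = p^{s−l}, M ⊆ G with 1 ∈ M and |M| = p^s, M is a union of right cosets of U, and |Stab(M)| = p^s, equals N(s−l, s), the number of chains of subgroups U ≤ V ≤ G with |U| = p^{s−l} and |V| = p^s. -/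
open Pointwise

private lemma stab_coe_subgroup {G : Type*} [Group G] (V : Subgroup G) :
    MulAction.stabilizer G (V : Set G) = V := by
  ext g
  simp only [MulAction.mem_stabilizer_iff]
  constructor
  · intro h
    have h1 : g • (1 : G) ∈ g • (V : Set G) := Set.smul_mem_smul_set V.one_mem
    rw [h] at h1
    simpa using h1
  · intro h
    exact smul_coe_set h

private lemma key_lemma {G : Type*} [Group G] [Finite G] (c : ℕ) :
    ∀ M : Set G, (1 : G) ∈ M → Nat.card M = c →
      Nat.card (MulAction.stabilizer G M) = c →
      M = (MulAction.stabilizer G M : Set G) := by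
  intro M h1 hM hStab
  have hsub : (MulAction.stabilizer G M : Set G) ⊆ M := by
    intro g hg
    have hg' : g • M = M := hg
    have : g • (1 : G) ∈ g • M := Set.smul_mem_smul_set h1
    rw [hg'] at this
    simpa using this
  have hle : M.ncard ≤ (MulAction.stabilizer G M : Set G).ncard := by
    rw [← Nat.card_coe_set_eq, ← Nat.card_coe_set_eq, hM]
    have : Nat.card ((MulAction.stabilizer G M : Set G)) =
        Nat.card (MulAction.stabilizer G M) := rfl
    rw [this, hStab]
  exact (Set.eq_of_subset_of_ncard_le hsub hle (Set.toFinite M)).symm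

/-- Let `|G| = p^t·n` with `p ∤ n` and `s ∈ [0, t]`.
(1) If `M ⊆ G` satisfies `1 ∈ M`, `|M| = p^s` and `|Stab(M)| = p^s`, then `M` is a
subgroup of `G`; in fact `M = Stab(M)`.
(2) Consequently, for `l ∈ [0, s]`, the number of pairs `(U, M)` with `U ≤ G` a
subgroup of order `p^(s-l)`, `M ⊆ G` with `1 ∈ M`, `|M| = p^s`, `M` a union of
right cosets of `U` and `|Stab(M)| = p^s`, equals `N(s-l, s)`, the number of chains
`U ≤ V ≤ G` with `|U| = p^(s-l)` and `|V| = p^s`. -/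
theorem stab_full_is_subgroup_and_pair_count {G : Type*} [Group G] [Finite G]
    (p t n s l : ℕ) (hp : p.Prime) (hG : Nat.card G = p ^ t * n) (hn : ¬ p ∣ n)
    (hs : s ≤ t) (hl : l ≤ s) :
    (∀ M : Set G, (1 : G) ∈ M → Nat.card M = p ^ s →
      Nat.card (MulAction.stabilizer G M) = p ^ s →
      M = (MulAction.stabilizer G M : Set G)) ∧
    Nat.card {x : Subgroup G × Set G //
        Nat.card x.1 = p ^ (s - l) ∧ (1 : G) ∈ x.2 ∧ Nat.card x.2 = p ^ s ∧
        (∃ S : Set G, x.2 = ⋃ g ∈ S, (x.1 : Set G) * {g}) ∧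
        Nat.card (MulAction.stabilizer G x.2) = p ^ s}
      = Nat.card {uv : Subgroup G × Subgroup G //
          uv.1 ≤ uv.2 ∧ Nat.card uv.1 = p ^ (s - l) ∧ Nat.card uv.2 = p ^ s} := by
  refine ⟨key_lemma (p ^ s), Nat.card_congr ?_⟩
  refine
    { toFun := fun x => ⟨(x.1.1, MulAction.stabilizer G x.1.2), ?_, ?_, ?_⟩
      invFun := fun y => ⟨(y.1.1, (y.1.2 : Set G)), ?_, ?_, ?_, ?_, ?_⟩
      left_inv := ?_
      right_inv := ?_ }
  · -- U ≤ stabilizer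
    obtain ⟨hU, h1, hM, ⟨S, hS⟩, hStab⟩ := x.2
    have hUM : (x.1.1 : Set G) ⊆ x.1.2 := by
      rw [hS] at h1
      simp only [Set.mem_iUnion, Set.mem_mul, Set.mem_singleton_iff] at h1
      obtain ⟨g, hgS, u, hu, y, rfl, hub⟩ := h1
      have hgU : y ∈ x.1.1 := by
        have hg : y = u⁻¹ := by
          rw [← one_mul y, ← inv_mul_cancel u, mul_assoc, hub, mul_one]
        rw [hg]; exact x.1.1.inv_mem hu
      intro v hv
      rw [hS]
      simp only [Set.mem_iUnion, Set.mem_mul, Set.mem_singleton_iff]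
      exact ⟨y, hgS, v * y⁻¹, x.1.1.mul_mem hv (x.1.1.inv_mem hgU), y, rfl, by group⟩
    have := key_lemma (p ^ s) x.1.2 h1 hM hStab
    intro v hv
    have : v ∈ x.1.2 := hUM hv
    rwa [key_lemma (p ^ s) x.1.2 h1 hM hStab] at this
  · exact x.2.1
  · exact x.2.2.2.2.2
  · -- card U
    exact y.2.2.1
  · exact y.1.2.one_mem
  · -- card coe set
    have : Nat.card ((y.1.2 : Set G)) = Nat.card y.1.2 := rfl
    rw [this]; exact y.2.2.2
  · -- union of cosets
    refine ⟨(y.1.2 : Set G), ?_⟩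
    ext v
    simp only [Set.mem_iUnion, Set.mem_mul, Set.mem_singleton_iff]
    constructor
    · intro hv
      exact ⟨v, hv, 1, y.1.1.one_mem, v, rfl, one_mul v⟩
    · rintro ⟨g, hg, u, hu, b, rfl, rfl⟩
      exact y.1.2.mul_mem (y.2.1 hu) hg
  · -- stabilizer card
    rw [stab_coe_subgroup]
    exact y.2.2.2
  · -- left_inv
    intro x
    obtain ⟨⟨U, M⟩, hU, h1, hM, hUnion, hStab⟩ := x
    apply Subtype.ext
    simp only
    exact Prod.ext rfl (key_lemma (p ^ s) M h1 hM hStab).symm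
  · -- right_inv
    intro y
    obtain ⟨⟨U, V⟩, hUV, hU, hV⟩ := y
    apply Subtype.ext
    simp only
    exact Prod.ext rfl (stab_coe_subgroup V)
end

section
/- Let l ∈ [0, s] and let M ⊆ G with 1 ∈ M, |M| = p^s and |Stab(M)| = p^{s−l}. Then the number of elements M' of the orbit [M] = {gM : g ∈ G} with 1 ∈ M' equals p^l. -/
open Pointwise

/-- Let `|G| = p^t·n` with `p ∤ n`, `s ∈ [0, t]` and `l ∈ [0, s]`.  If `M ⊆ G`
satisfies `1 ∈ M`, `|M| = p^s` and `|Stab(M)| = p^(s-l)`, then the orbit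
`[M] = {gM : g ∈ G}` contains exactly `p^l` elements containing `1`. -/
theorem card_orbit_mem_one {G : Type*} [Group G] [Finite G] (p t n s l : ℕ)
    (hp : p.Prime) (hG : Nat.card G = p ^ t * n) (hn : ¬ p ∣ n)
    (hs : s ≤ t) (hl : l ≤ s) (M : Set G) (h1 : (1 : G) ∈ M)
    (hM : Nat.card M = p ^ s)
    (hstab : Nat.card (MulAction.stabilizer G M) = p ^ (s - l)) :
    Nat.card {M' : Set G // M' ∈ MulAction.orbit G M ∧ (1 : G) ∈ M'} = p ^ l := by
  classical
  set H := MulAction.stabilizer G M with hH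
  set T := {M' : Set G // M' ∈ MulAction.orbit G M ∧ (1 : G) ∈ M'} with hT
  have hf1 : ∀ m : G, m ∈ M → (1 : G) ∈ m⁻¹ • M := by
    intro m hm
    exact ⟨m, hm, inv_mul_cancel m⟩
  let f : M → T := fun m => ⟨(m : G)⁻¹ • M, ⟨(m : G)⁻¹, rfl⟩, hf1 m m.2⟩
  have key : ∀ y : T, Nonempty (H ≃ {m : M // f m = y}) := by
    rintro ⟨N, ⟨c, rfl⟩, h1N⟩
    have hgM : (c : G)⁻¹ ∈ M := by
      rcases h1N with ⟨x, hx, hcx⟩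
      have hx1 : c * x = 1 := hcx
      rwa [eq_inv_of_mul_eq_one_right hx1] at hx
    refine ⟨Equiv.ofBijective (fun h : H => ⟨⟨(h : G) * c⁻¹, ?_⟩, ?_⟩) ⟨?_, ?_⟩⟩
    · have : (h : G) • M = M := h.2
      rw [← this]
      exact ⟨c⁻¹, hgM, rfl⟩
    · apply Subtype.ext
      show ((h : G) * c⁻¹)⁻¹ • M = c • M
      have h2 : (h : G)⁻¹ • M = M := by
        have : (h : G)⁻¹ ∈ H := inv_mem h.2
        exact this
      rw [mul_inv_rev, inv_inv, mul_smul, h2]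
    · intro a b hab
      have : ((a : G) * c⁻¹ : G) = (b : G) * c⁻¹ := by
        have := congrArg (fun x => ((x : {m : M // f m = _}) : M).val) hab
        exact this
      ext
      exact mul_right_cancel this
    · rintro ⟨⟨m, hmM⟩, hm⟩
      have hmN : (m : G)⁻¹ • M = c • M := congrArg Subtype.val hm
      have hmc : (m * c : G) ∈ H := by
        show (m * c) • M = M
        rw [mul_smul, ← hmN, smul_inv_smul]
      refine ⟨⟨m * c, hmc⟩, ?_⟩
      apply Subtype.ext
      apply Subtype.ext
      show (m * c) * c⁻¹ = m
      group
  have card_eq : Nat.card M = Nat.card T * Nat.card H := by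
    have e1 : M ≃ Σ y : T, {m : M // f m = y} :=
      (Equiv.sigmaFiberEquiv f).symm
    have e2 : (Σ y : T, {m : M // f m = y}) ≃ Σ _y : T, H :=
      Equiv.sigmaCongrRight fun y => (key y).some.symm
    have e3 : (Σ _y : T, H) ≃ T × H := Equiv.sigmaEquivProd T H
    rw [Nat.card_congr (e1.trans (e2.trans e3)), Nat.card_prod]
  rw [hM, hstab] at card_eq
  have hpow : p ^ s = p ^ l * p ^ (s - l) := by
    rw [← pow_add, Nat.add_sub_cancel' hl]
  rw [hpow] at card_eq
  have hpos : 0 < p ^ (s - l) := Nat.pow_pos hp.pos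
  exact (Nat.eq_of_mul_eq_mul_right hpos card_eq.symm)
end

section
/- For every l ∈ [0, s], the number a_l of G-orbits of length p^{t−s+l}·n on p^s-element subsets of G equals (1/p^l) times the number of subsets M ⊆ G with 1 ∈ M, |M| = p^s and |Stab(M)| = p^{s−l}. -/
open Pointwise

section Aux

variable {G : Type*} [Group G]

lemma aux_card_smul_set (g : G) (M : Set G) : Nat.card ↥(g • M) = Nat.card M := by
  rw [Nat.card_coe_set_eq, Nat.card_coe_set_eq, Set.ncard_smul_set]

lemma aux_card_stab_smul (g : G) (M : Set G) :
    Nat.card (MulAction.stabilizer G (g • M)) = Nat.card (MulAction.stabilizer G M) := by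
  rw [MulAction.stabilizer_smul_eq_stabilizer_map_conj]
  exact (Nat.card_congr (Subgroup.equivMapOfInjective _ _
    (MulAut.conj g).injective).toEquiv).symm

lemma aux_orbit_stab [Finite G] (M : Set G) :
    Nat.card (MulAction.orbit G M) * Nat.card (MulAction.stabilizer G M) = Nat.card G := by
  rw [Nat.card_congr (MulAction.orbitEquivQuotientStabilizer G M),
    ← Subgroup.card_eq_card_quotient_mul_card_subgroup]

lemma aux_fiber_count {A B : Type*} [Finite A] [Finite B] (f : A → B) (c : ℕ)
    (h : ∀ b, Nat.card {a // f a = b} = c) : Nat.card A = c * Nat.card B := by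
  classical
  have := Fintype.ofFinite A
  have := Fintype.ofFinite B
  rw [Nat.card_congr (Equiv.sigmaFiberEquiv f).symm]
  simp only [Nat.card_eq_fintype_card, Fintype.card_sigma]
  rw [← Nat.card_eq_fintype_card (α := B)]
  calc ∑ b : B, Fintype.card {a // f a = b} = ∑ b : B, c := by
        refine Finset.sum_congr rfl fun b _ => ?_
        rw [← Nat.card_eq_fintype_card, h]
    _ = c * Nat.card B := by simp [Nat.card_eq_fintype_card, mul_comm]

/-- Key counting: for a pointed set `M₀`, `|M₀| = |Stab M₀| * |pointed sets in orbit|`. -/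
lemma aux_pointed_orbit_card [Finite G] (M₀ : Set G) (h1 : (1 : G) ∈ M₀) :
    Nat.card M₀ =
      Nat.card (MulAction.stabilizer G M₀) *
        Nat.card {M : Set G // (1 : G) ∈ M ∧ M ∈ MulAction.orbit G M₀} := by
  set P := {M : Set G // (1 : G) ∈ M ∧ M ∈ MulAction.orbit G M₀} with hP
  have hψmem : ∀ x : M₀, (1 : G) ∈ (x : G)⁻¹ • M₀ ∧ (x : G)⁻¹ • M₀ ∈ MulAction.orbit G M₀ := by
    intro x
    constructor
    · rw [Set.mem_smul_set_iff_inv_smul_mem]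
      simpa using x.2
    · exact MulAction.mem_orbit M₀ _
  set ψ : M₀ → P := fun x => ⟨(x : G)⁻¹ • M₀, hψmem x⟩ with hψ
  refine aux_fiber_count ψ _ fun b => ?_
  obtain ⟨g, hg⟩ := b.2.2
  simp only at hg
  have hginv : g⁻¹ ∈ M₀ := by
    have := b.2.1
    rw [← hg, Set.mem_smul_set_iff_inv_smul_mem] at this
    simpa using this
  refine Nat.card_congr (Equiv.symm ?_)
  refine ⟨fun h => ⟨⟨(h : G)⁻¹ * g⁻¹, ?_⟩, ?_⟩, fun x => ⟨g⁻¹ * (x : G)⁻¹, ?_⟩, ?_, ?_⟩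
  · have hs : ((h : G)⁻¹) • M₀ = M₀ := (MulAction.stabilizer G M₀).inv_mem h.2
    have : (h : G)⁻¹ • g⁻¹ ∈ (h : G)⁻¹ • M₀ := Set.smul_mem_smul_set hginv
    rwa [hs, smul_eq_mul] at this
  · apply Subtype.ext
    show (((h : G)⁻¹ * g⁻¹)⁻¹) • M₀ = (b : Set G)
    have hsh : (h : G) • M₀ = M₀ := h.2
    rw [mul_inv_rev, inv_inv, inv_inv, mul_smul, hsh, hg]
  · have hx : ((x : M₀) : G)⁻¹ • M₀ = (b : Set G) := congrArg Subtype.val x.2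
    show (g⁻¹ * ((x : M₀) : G)⁻¹) • M₀ = M₀
    rw [mul_smul, hx, ← hg, inv_smul_smul]
  · intro h
    apply Subtype.ext
    show g⁻¹ * ((h : G)⁻¹ * g⁻¹)⁻¹ = (h : G)
    group
  · intro x
    apply Subtype.ext
    apply Subtype.ext
    show (g⁻¹ * ((x : M₀) : G)⁻¹)⁻¹ * g⁻¹ = ((x : M₀) : G)
    group

end Aux

/-- For every `l ∈ [0, s]`, the number `a_l` of orbits of length `p^(t-s+l)·n` equals
`1/p^l` times the number of subsets `M ⊆ G` with `1 ∈ M`, `|M| = p^s` and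
`|Stab(M)| = p^(s-l)` (stated multiplied through by `p^l`). -/
theorem orbitCount_eq_card_pointed_subsets {G : Type*} [Group G] [Finite G]
    (p t n s l : ℕ) (hp : p.Prime) (hG : Nat.card G = p ^ t * n) (hn : ¬ p ∣ n)
    (hs : s ≤ t) (hl : l ≤ s) :
    p ^ l * orbitCount G p s t n l =
      Nat.card {M : Set G // (1 : G) ∈ M ∧ Nat.card M = p ^ s ∧
        Nat.card (MulAction.stabilizer G M) = p ^ (s - l)} := by
  classical
  have hppos : 0 < p := hp.pos
  have hGpos : 0 < Nat.card G := Nat.card_pos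
  have hnpos : 0 < n := by
    rcases Nat.eq_zero_or_pos n with h | h
    · rw [h, mul_zero] at hG; omega
    · exact h
  have hexp1 : p ^ (t - s + l) * p ^ (s - l) = p ^ t := by
    rw [← pow_add]; congr 1; omega
  have hexp2 : p ^ l * p ^ (s - l) = p ^ s := by
    rw [← pow_add]; congr 1; omega
  set S := {M : Set G // (1 : G) ∈ M ∧ Nat.card M = p ^ s ∧
      Nat.card (MulAction.stabilizer G M) = p ^ (s - l)} with hS
  set T := {O : Set (Set G) //
      (∃ M : Set G, Nat.card M = p ^ s ∧ O = MulAction.orbit G M) ∧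
      Nat.card O = p ^ (t - s + l) * n} with hT
  have hF : ∀ M : S, ((∃ M' : Set G, Nat.card M' = p ^ s ∧
      MulAction.orbit G M.1 = MulAction.orbit G M') ∧
      Nat.card (MulAction.orbit G M.1) = p ^ (t - s + l) * n) := by
    intro M
    have hos := aux_orbit_stab M.1
    rw [M.2.2.2, hG] at hos
    have hcard : Nat.card (MulAction.orbit G M.1) = p ^ (t - s + l) * n := by
      have h2 : Nat.card (MulAction.orbit G M.1) * p ^ (s - l) =
          (p ^ (t - s + l) * n) * p ^ (s - l) := by
        rw [hos, mul_right_comm, hexp1]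
      exact Nat.eq_of_mul_eq_mul_right (pow_pos hppos _) h2
    exact ⟨⟨M.1, M.2.2.1, rfl⟩, hcard⟩
  set F : S → T := fun M => ⟨MulAction.orbit G M.1, (hF M).1, (hF M).2⟩ with hFdef
  have key : ∀ b : T, Nat.card {M : S // F M = b} = p ^ l := by
    intro b
    obtain ⟨⟨M₁, hM₁card, hM₁orb⟩, hbcard⟩ := b.2
    have hM₁ne : M₁.Nonempty := by
      apply Set.nonempty_of_ncard_ne_zero
      rw [← Nat.card_coe_set_eq, hM₁card]
      positivity
    obtain ⟨x, hx⟩ := hM₁ne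
    set M₀ := x⁻¹ • M₁ with hM₀def
    have h1M₀ : (1 : G) ∈ M₀ := by
      rw [hM₀def, Set.mem_smul_set_iff_inv_smul_mem]
      simpa using hx
    have horb : MulAction.orbit G M₀ = MulAction.orbit G M₁ := MulAction.orbit_smul _ _
    have hbM₀ : (b : Set (Set G)) = MulAction.orbit G M₀ := by rw [hM₁orb, horb]
    have hM₀card : Nat.card M₀ = p ^ s := by
      rw [hM₀def, aux_card_smul_set]; exact hM₁card
    have hstab₀ : Nat.card (MulAction.stabilizer G M₀) = p ^ (s - l) := by
      have hos := aux_orbit_stab M₀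
      rw [← hbM₀] at hos
      rw [hbcard, hG] at hos
      have h2 : (p ^ (t - s + l) * n) * Nat.card (MulAction.stabilizer G M₀) =
          (p ^ (t - s + l) * n) * p ^ (s - l) := by
        rw [hos, mul_right_comm, hexp1]
      exact Nat.eq_of_mul_eq_mul_left (by positivity) h2
    have hcount := aux_pointed_orbit_card M₀ h1M₀
    rw [hM₀card, hstab₀] at hcount
    have hP : Nat.card {M : Set G // (1 : G) ∈ M ∧ M ∈ MulAction.orbit G M₀} = p ^ l := by
      have h2 : p ^ (s - l) * Nat.card {M : Set G // (1 : G) ∈ M ∧ M ∈ MulAction.orbit G M₀}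
          = p ^ (s - l) * p ^ l := by
        rw [← hcount, mul_comm (p ^ (s - l)), hexp2]
      exact Nat.eq_of_mul_eq_mul_left (pow_pos hppos _) h2
    refine Eq.trans (Nat.card_congr ?_) hP
    refine ⟨fun M => ⟨M.1.1, M.1.2.1, ?_⟩, fun M => ⟨⟨M.1, M.2.1, ?_, ?_⟩, ?_⟩, ?_, ?_⟩
    · have h2 : MulAction.orbit G M.1.1 = (b : Set (Set G)) := congrArg Subtype.val M.2
      have h3 : MulAction.orbit G M.1.1 = MulAction.orbit G M₀ := h2.trans hbM₀
      rw [← h3]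
      exact MulAction.mem_orbit_self _
    · obtain ⟨g, hg⟩ := M.2.2
      simp only at hg
      rw [← hg, aux_card_smul_set, hM₀card]
    · obtain ⟨g, hg⟩ := M.2.2
      simp only at hg
      rw [← hg, aux_card_stab_smul, hstab₀]
    · obtain ⟨g, hg⟩ := M.2.2
      simp only at hg
      apply Subtype.ext
      show MulAction.orbit G M.1 = (b : Set (Set G))
      rw [← hg, MulAction.orbit_smul, ← hbM₀]
    · intro M
      apply Subtype.ext
      apply Subtype.ext
      rfl
    · intro M
      apply Subtype.ext
      rfl
  have hmain := aux_fiber_count F (p ^ l) key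
  rw [hmain]
  rfl
end

section
/- Let l ∈ [0, s] and k ∈ [0, l]. The number of pairs (U, M), where U ≤ G with |U| = p^{s−l}, M ⊆ G with 1 ∈ M, |M| = p^s, |Stab(M)| = p^{s−k}, and M is a union of right cosets of U, equals Σ_{I ⊆ [0, k], k ∈ I} (-1)^{|I|+1} · b(min I) · N(s − (I ∪ {l})). -/
open Pointwise

/-- `chainCount G p s I` is the number `N(s - I)` of chains of `p`-subgroups of `G`:
for `I = {c₁ > c₂ > … > c_k} ⊆ [0, s]`, this counts tuples `U₁ ≤ U₂ ≤ … ≤ U_k ≤ G`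
with `|U_i| = p^(s - c_i)`. -/
noncomputable def chainCount (G : Type*) [Group G] (p s : ℕ) (I : Finset ℕ) : ℕ :=
  Nat.card {f : I → Subgroup G //
    (∀ i j : I, (i : ℕ) ≤ (j : ℕ) → f j ≤ f i) ∧
    ∀ i : I, Nat.card (f i) = p ^ (s - (i : ℕ))}

/-- `bCoeff p t s n k` is the binomial coefficient `b(k) = C(p^(t-s+k)·n - 1, p^k - 1)`,
as an integer. -/
def bCoeff (p t s n k : ℕ) : ℤ :=
  (Nat.choose (p ^ (t - s + k) * n - 1) (p ^ k - 1) : ℤ)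

open scoped Classical

section AuxKulshammer
variable {G : Type*} [Group G]

lemma count_subsets {α : Type*} [Fintype α] (a : α) (m : ℕ) (hm : 0 < m) :
    Nat.card {A : Set α // a ∈ A ∧ Nat.card A = m} = (Fintype.card α - 1).choose (m - 1) := by
  classical
  have h1 : Nat.card {A : Set α // a ∈ A ∧ Nat.card A = m}
      = Nat.card {B : Finset α // a ∈ B ∧ B.card = m} := by
    refine Nat.card_congr (Equiv.subtypeEquiv Fintype.finsetEquivSet ?_).symm
    intro B
    simp [Nat.card_coe_set_eq, Set.ncard_coe_finset]
  rw [h1, Nat.card_eq_fintype_card, Fintype.card_subtype]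
  have h2 : (Finset.univ.filter (fun B : Finset α => a ∈ B ∧ B.card = m)).card
      = (Finset.powersetCard (m-1) (Finset.univ.erase a)).card := by
    refine Finset.card_bij' (fun B _ => B.erase a) (fun C _ => insert a C) ?_ ?_ ?_ ?_
    · intro B hB
      simp only [Finset.mem_filter, Finset.mem_univ, true_and] at hB
      rw [Finset.mem_powersetCard]
      constructor
      · intro x hx
        simp only [Finset.mem_erase] at hx ⊢
        exact ⟨hx.1, Finset.mem_univ _⟩
      · rw [Finset.card_erase_of_mem hB.1, hB.2]
    · intro C hC
      rw [Finset.mem_powersetCard] at hC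
      simp only [Finset.mem_filter, Finset.mem_univ, true_and]
      have haC : a ∉ C := fun h => by simpa using hC.1 h
      refine ⟨Finset.mem_insert_self _ _, ?_⟩
      rw [Finset.card_insert_of_notMem haC, hC.2]
      omega
    · intro B hB
      simp only [Finset.mem_filter, Finset.mem_univ, true_and] at hB
      exact Finset.insert_erase hB.1
    · intro C hC
      rw [Finset.mem_powersetCard] at hC
      have haC : a ∉ C := fun h => by simpa using hC.1 h
      exact Finset.erase_insert haC
  rw [h2, Finset.card_powersetCard, Finset.card_erase_of_mem (Finset.mem_univ a),
    Finset.card_univ]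

lemma le_stab_iff_mul (U : Subgroup G) (M : Set G) :
    U ≤ MulAction.stabilizer G M ↔ (U : Set G) * M = M := by
  constructor
  · intro h
    apply Set.Subset.antisymm
    · rintro x ⟨u, hu, m, hm, rfl⟩
      have h1 : u • M = M := h hu
      rw [← h1]
      exact Set.smul_mem_smul_set hm
    · intro m hm
      exact ⟨1, U.one_mem, m, hm, one_mul m⟩
  · intro h u hu
    have h1 : u • M ⊆ M := by
      rintro x ⟨m, hm, rfl⟩
      rw [← h]; exact ⟨u, hu, m, hm, rfl⟩
    have h2 : u⁻¹ • M ⊆ M := by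
      rintro x ⟨m, hm, rfl⟩
      rw [← h]; exact ⟨u⁻¹, U.inv_mem hu, m, hm, rfl⟩
    refine Set.Subset.antisymm h1 ?_
    intro m hm
    have : u⁻¹ • m ∈ M := h2 ⟨m, hm, rfl⟩
    exact ⟨u⁻¹ • m, this, by simp⟩

lemma card_inv_set (M : Set G) : Nat.card (M⁻¹ : Set G) = Nat.card M := by
  rw [← Set.image_inv_eq_inv]
  exact Nat.card_image_of_injective inv_injective M

lemma card_preimage_mk (V : Subgroup G) (A : Set (G ⧸ V)) :
    Nat.card (QuotientGroup.mk ⁻¹' A : Set G) = Nat.card V * Nat.card A := by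
  rw [Nat.card_congr (QuotientGroup.preimageMkEquivSubgroupProdSet V A), Nat.card_prod]

lemma sat_inv_preimage (V : Subgroup G) (M : Set G) (h : (V : Set G) * M = M) :
    QuotientGroup.mk ⁻¹' (QuotientGroup.mk '' M⁻¹ : Set (G ⧸ V)) = M⁻¹ := by
  ext x
  simp only [Set.mem_preimage, Set.mem_image]
  constructor
  · rintro ⟨m, hm, hmx⟩
    rw [QuotientGroup.eq] at hmx
    -- m⁻¹ * x ∈ V, m ∈ M⁻¹
    have hx : x⁻¹ ∈ (V : Set G) * M := by
      refine ⟨(m⁻¹ * x)⁻¹, V.inv_mem hmx, m⁻¹, hm, ?_⟩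
      group
    rw [h] at hx
    exact hx
  · intro hx
    exact ⟨x, hx, rfl⟩

lemma card_dvd_of_le_stab (V : Subgroup G) (M : Set G) (h : V ≤ MulAction.stabilizer G M) :
    Nat.card V ∣ Nat.card M := by
  have hsat := sat_inv_preimage V M ((le_stab_iff_mul V M).mp h)
  have key : Nat.card M = Nat.card V * Nat.card (QuotientGroup.mk '' M⁻¹ : Set (G ⧸ V)) := by
    conv_lhs => rw [← card_inv_set M, ← hsat, card_preimage_mk]
  exact ⟨_, key⟩

lemma count_sets [Finite G] (V : Subgroup G) (m : ℕ) (hm : 0 < m) :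
    Nat.card {M : Set G // 1 ∈ M ∧ Nat.card M = Nat.card V * m ∧ V ≤ MulAction.stabilizer G M}
      = (Nat.card (G ⧸ V) - 1).choose (m - 1) := by
  classical
  have := Fintype.ofFinite G
  have hVpos : 0 < Nat.card V := Nat.card_pos
  have key : ∀ (M : Set G), V ≤ MulAction.stabilizer G M →
      QuotientGroup.mk ⁻¹' (QuotientGroup.mk '' M⁻¹ : Set (G ⧸ V)) = M⁻¹ := by
    intro M hM
    exact sat_inv_preimage V M ((le_stab_iff_mul V M).mp hM)
  have e : {M : Set G // 1 ∈ M ∧ Nat.card M = Nat.card V * m ∧ V ≤ MulAction.stabilizer G M}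
      ≃ {A : Set (G ⧸ V) // (QuotientGroup.mk 1 : G ⧸ V) ∈ A ∧ Nat.card A = m} := by
    refine
    { toFun := fun M => ⟨QuotientGroup.mk '' (M.1)⁻¹, ?_, ?_⟩
      invFun := fun A => ⟨((QuotientGroup.mk ⁻¹' A.1 : Set G))⁻¹, ?_, ?_, ?_⟩
      left_inv := ?_
      right_inv := ?_ }
    · exact ⟨1, by simpa using M.2.1, rfl⟩
    · obtain ⟨M, h1, h2, h3⟩ := M
      have hcard : Nat.card V * Nat.card (QuotientGroup.mk '' M⁻¹ : Set (G ⧸ V))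
          = Nat.card V * m := by
        rw [← card_preimage_mk, key M h3, card_inv_set, h2]
      exact Nat.eq_of_mul_eq_mul_left hVpos hcard
    · simpa using A.2.1
    · rw [card_inv_set, card_preimage_mk, A.2.2]
    · rw [le_stab_iff_mul]
      apply Set.Subset.antisymm
      · rintro x ⟨v, hv, y, hy, rfl⟩
        simp only [Set.mem_inv, Set.mem_preimage] at hy ⊢
        have : QuotientGroup.mk ((v * y)⁻¹) = (QuotientGroup.mk y⁻¹ : G ⧸ V) := by
          rw [mul_inv_rev, QuotientGroup.eq]
          group
          exact hv
        rw [this]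
        exact hy
      · intro x hx
        exact ⟨1, V.one_mem, x, hx, one_mul x⟩
    · rintro ⟨M, h1, h2, h3⟩
      ext1
      simp only
      rw [key M h3, inv_inv]
    · rintro ⟨A, g1, g2⟩
      ext1
      simp only [inv_inv]
      exact Set.image_preimage_eq A (QuotientGroup.mk_surjective)
  rw [Nat.card_congr e]
  have h := count_subsets (α := G ⧸ V) (QuotientGroup.mk 1) m hm
  rw [h, Nat.card_eq_fintype_card]

lemma exists_union_iff (U : Subgroup G) (M : Set G) :
    (∃ S : Set G, M = ⋃ g ∈ S, (U : Set G) * {g}) ↔ U ≤ MulAction.stabilizer G M := by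
  rw [le_stab_iff_mul]
  constructor
  · rintro ⟨S, rfl⟩
    apply Set.Subset.antisymm
    · rintro x ⟨u, hu, m, hm, rfl⟩
      simp only [Set.mem_iUnion] at hm ⊢
      obtain ⟨g, hg, hmg⟩ := hm
      obtain ⟨u', hu', g', hg', rfl⟩ := hmg
      refine ⟨g, hg, u * u', mul_mem hu hu', g', hg', ?_⟩
      show u * u' * g' = u * (u' * g')
      rw [mul_assoc]
    · intro x hx
      exact ⟨1, U.one_mem, x, hx, one_mul x⟩
  · intro h
    refine ⟨M, ?_⟩
    apply Set.Subset.antisymm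
    · intro m hm
      simp only [Set.mem_iUnion]
      exact ⟨m, hm, 1, U.one_mem, m, rfl, one_mul m⟩
    · intro x hx
      simp only [Set.mem_iUnion] at hx
      obtain ⟨g, hg, u, hu, g', hg', rfl⟩ := hx
      rw [Set.mem_singleton_iff] at hg'
      subst hg'
      rw [← h]
      exact ⟨u, hu, g', hg, rfl⟩

def goodChain (p s k : ℕ) (U : Subgroup G) (S : Finset (ℕ × Subgroup G)) : Prop :=
  (∀ x ∈ S, x.1 ≤ k ∧ Nat.card x.2 = p ^ (s - x.1) ∧ U ≤ x.2) ∧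
  (∃ V, (k, V) ∈ S) ∧
  (∀ x ∈ S, ∀ y ∈ S, x.1 ≤ y.1 → y.2 ≤ x.2)

def goodGraph (p s k : ℕ) (U T : Subgroup G) (S : Finset (ℕ × Subgroup G)) : Prop :=
  (∀ x ∈ S, x.1 ≤ k ∧ Nat.card x.2 = p ^ (s - x.1) ∧ U ≤ x.2 ∧ x.2 ≤ T) ∧
  (∃ V, (k, V) ∈ S) ∧
  (∀ x ∈ S, ∀ y ∈ S, x.1 ≤ y.1 → y.2 ≤ x.2)

lemma goodGraph_iff (p s k : ℕ) (U T : Subgroup G) (S : Finset (ℕ × Subgroup G)) :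
    goodGraph p s k U T S ↔ goodChain p s k U S ∧ ∀ x ∈ S, x.2 ≤ T := by
  unfold goodGraph goodChain
  constructor
  · rintro ⟨h1, h2, h3⟩
    exact ⟨⟨fun x hx => ⟨(h1 x hx).1, (h1 x hx).2.1, (h1 x hx).2.2.1⟩, h2, h3⟩,
      fun x hx => (h1 x hx).2.2.2⟩
  · rintro ⟨⟨h1, h2, h3⟩, h4⟩
    exact ⟨fun x hx => ⟨(h1 x hx).1, (h1 x hx).2.1, (h1 x hx).2.2, h4 x hx⟩, h2, h3⟩

lemma card_subtype_eq_filter {α : Type*} (t : Finset α) (P : α → Prop) [DecidablePred P]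
    (h : ∀ x, P x → x ∈ t) : Nat.card {x // P x} = (t.filter P).card := by
  rw [← Nat.card_eq_finsetCard]
  apply Nat.card_congr
  exact
  { toFun := fun x => ⟨x.1, Finset.mem_filter.mpr ⟨h x.1 x.2, x.2⟩⟩
    invFun := fun y => ⟨y.1, (Finset.mem_filter.mp y.2).2⟩
    left_inv := fun x => rfl
    right_inv := fun y => rfl }

lemma chainCount_eq_graphs [Finite G] (p s l k : ℕ) (hk : k ≤ l) (hl : l ≤ s)
    (I : Finset ℕ) (hI : I ⊆ Finset.range (k + 1)) (hkI : k ∈ I) :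
    chainCount G p s (insert l I)
      = Nat.card {q : Subgroup G × Finset (ℕ × Subgroup G) //
          Nat.card q.1 = p ^ (s - l) ∧ goodChain p s k q.1 q.2 ∧
          q.2.image Prod.fst = I} := by
  have hIk : ∀ c ∈ I, c ≤ k := fun c hc => by
    have := hI hc; rw [Finset.mem_range] at this; omega
  have hlmem : l ∈ insert l I := Finset.mem_insert_self l I
  have huniq : ∀ (U : Subgroup G) (S : Finset (ℕ × Subgroup G)), goodChain p s k U S →
      ∀ x ∈ S, ∀ y ∈ S, x.1 = y.1 → x = y := by
    rintro U S ⟨-, -, hc⟩ x hx y hy hxy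
    have h1 : y.2 ≤ x.2 := hc x hx y hy (le_of_eq hxy)
    have h2 : x.2 ≤ y.2 := hc y hy x hx (le_of_eq hxy.symm)
    exact Prod.ext hxy (le_antisymm h2 h1)
  -- choose function
  have hchoose : ∀ (q : Subgroup G × Finset (ℕ × Subgroup G)),
      (goodChain p s k q.1 q.2 ∧ q.2.image Prod.fst = I) → ∀ c ∈ I,
      ∃! x, x ∈ q.2 ∧ x.1 = c := by
    rintro q ⟨hgc, himg⟩ c hc
    have hc' : c ∈ q.2.image Prod.fst := by rw [himg]; exact hc
    obtain ⟨x, hx, hx1⟩ := Finset.mem_image.mp hc'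
    exact ⟨x, ⟨hx, hx1⟩, fun y hy => huniq _ _ hgc y hy.1 x hx (hy.2.trans hx1.symm)⟩
  refine Nat.card_congr ?_
  refine
  { toFun := fun f => ⟨(f.1 ⟨l, hlmem⟩,
      I.attach.image (fun c : {x // x ∈ I} =>
        (c.1, f.1 ⟨c.1, Finset.mem_insert_of_mem c.2⟩))), ?_, ?_, ?_⟩
    invFun := fun q => ⟨fun c => if h : (c : ℕ) ∈ I then
        (q.1.2.choose (fun x => x.1 = (c : ℕ)) (hchoose q.1 ⟨q.2.2.1, q.2.2.2⟩ _ h)).2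
        else q.1.1, ?_, ?_⟩
    left_inv := ?_
    right_inv := ?_ }
  · exact f.2.2 ⟨l, hlmem⟩
  · -- goodChain for the graph
    obtain ⟨f, hmono, horder⟩ := f
    refine ⟨?_, ?_, ?_⟩
    · rintro x hx
      obtain ⟨c, -, rfl⟩ := Finset.mem_image.mp hx
      refine ⟨hIk c.1 c.2, horder _, ?_⟩
      exact hmono ⟨c.1, Finset.mem_insert_of_mem c.2⟩ ⟨l, hlmem⟩ (le_trans (hIk c.1 c.2) hk)
    · refine ⟨f ⟨k, Finset.mem_insert_of_mem hkI⟩, Finset.mem_image.mpr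
        ⟨⟨k, hkI⟩, Finset.mem_attach _ _, rfl⟩⟩
    · rintro x hx y hy hxy
      obtain ⟨c, -, rfl⟩ := Finset.mem_image.mp hx
      obtain ⟨d, -, rfl⟩ := Finset.mem_image.mp hy
      exact hmono _ _ hxy
  · -- image of fst is I
    obtain ⟨f, hmono, horder⟩ := f
    rw [Finset.image_image]
    ext c
    simp only [Finset.mem_image, Finset.mem_attach, true_and, Function.comp_apply]
    constructor
    · rintro ⟨d, rfl⟩; exact d.2
    · intro hc; exact ⟨⟨c, hc⟩, rfl⟩
  · -- monotone for invFun
    rintro ⟨ci, hci⟩ ⟨cj, hcj⟩ hij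
    obtain ⟨⟨U, S⟩, hU, hgc, himg⟩ := q
    simp only
    by_cases hi : ci ∈ I <;> by_cases hj : cj ∈ I
    · rw [dif_pos hi, dif_pos hj]
      have h1 := S.choose_mem (fun x => x.1 = ci) (hchoose (U, S) ⟨hgc, himg⟩ _ hi)
      have h2 := S.choose_property (fun x => x.1 = ci) (hchoose (U, S) ⟨hgc, himg⟩ _ hi)
      have h3 := S.choose_mem (fun x => x.1 = cj) (hchoose (U, S) ⟨hgc, himg⟩ _ hj)
      have h4 := S.choose_property (fun x => x.1 = cj) (hchoose (U, S) ⟨hgc, himg⟩ _ hj)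
      exact hgc.2.2 _ h1 _ h3 (by rw [h2, h4]; exact hij)
    · -- cj ∉ I so cj = l ; value is U ; need U ≤ choose ci
      rw [dif_pos hi, dif_neg hj]
      have h1 := S.choose_mem (fun x => x.1 = ci) (hchoose (U, S) ⟨hgc, himg⟩ _ hi)
      exact (hgc.1 _ h1).2.2
    · have hij' : ci ≤ cj := hij
      have hcil : ci = l := (Finset.mem_insert.mp hci).resolve_right (fun h => hi h)
      have hcjk : cj ≤ k := hIk _ hj
      have : ci = cj := by omega
      exact absurd (this ▸ hj) hi
    · have hcil : ci = l := by
        rcases Finset.mem_insert.mp hci with h | h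
        · exact h
        · exact absurd h hi
      have hcjl : cj = l := by
        rcases Finset.mem_insert.mp hcj with h | h
        · exact h
        · exact absurd h hj
      subst hcil
      rw [dif_neg hi]
      exact le_of_eq (by rw [dif_neg hj])
  · -- orders for invFun
    rintro ⟨c, hc⟩
    obtain ⟨⟨U, S⟩, hU, hgc, himg⟩ := q
    simp only
    by_cases hi : c ∈ I
    · rw [dif_pos hi]
      have h1 := S.choose_mem (fun x => x.1 = c) (hchoose (U, S) ⟨hgc, himg⟩ _ hi)
      have h2 := S.choose_property (fun x => x.1 = c) (hchoose (U, S) ⟨hgc, himg⟩ _ hi)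
      have := (hgc.1 _ h1).2.1
      rw [h2] at this
      exact this
    · rw [dif_neg hi]
      have hcl : c = l := by
        rcases Finset.mem_insert.mp hc with h | h
        · exact h
        · exact absurd h hi
      rw [hcl]
      exact hU
  · -- left inverse
    rintro ⟨f, hmono, horder⟩
    apply Subtype.ext
    funext c
    simp only
    by_cases h : (c : ℕ) ∈ I
    · rw [dif_pos h]
      set gr := I.attach.image (fun c : {x // x ∈ I} =>
        (c.1, f ⟨c.1, Finset.mem_insert_of_mem c.2⟩)) with hgr
      have hgc' : goodChain p s k (f ⟨l, hlmem⟩) gr ∧ gr.image Prod.fst = I := by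
        constructor
        · refine ⟨?_, ?_, ?_⟩
          · rintro x hx
            obtain ⟨c', -, rfl⟩ := Finset.mem_image.mp hx
            refine ⟨hIk c'.1 c'.2, horder _, ?_⟩
            exact hmono ⟨c'.1, Finset.mem_insert_of_mem c'.2⟩ ⟨l, hlmem⟩
              (le_trans (hIk c'.1 c'.2) hk)
          · exact ⟨f ⟨k, Finset.mem_insert_of_mem hkI⟩, Finset.mem_image.mpr
              ⟨⟨k, hkI⟩, Finset.mem_attach _ _, rfl⟩⟩
          · rintro x hx y hy hxy
            obtain ⟨c', -, rfl⟩ := Finset.mem_image.mp hx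
            obtain ⟨d', -, rfl⟩ := Finset.mem_image.mp hy
            exact hmono _ _ hxy
        · rw [Finset.image_image]
          ext c'
          simp only [Finset.mem_image, Finset.mem_attach, true_and, Function.comp_apply]
          exact ⟨fun ⟨d, hd⟩ => hd ▸ d.2, fun hc' => ⟨⟨c', hc'⟩, rfl⟩⟩
      have hmem := gr.choose_mem (fun x => x.1 = (c : ℕ)) (hchoose (f ⟨l, hlmem⟩, gr) hgc' _ h)
      have hprop := gr.choose_property (fun x => x.1 = (c : ℕ)) (hchoose (f ⟨l, hlmem⟩, gr) hgc' _ h)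
      obtain ⟨d, -, hd⟩ := Finset.mem_image.mp hmem
      rw [← hd] at hprop ⊢
      simp only at hprop ⊢
      exact congrArg f (Subtype.ext hprop)
    · rw [dif_neg h]
      have hcl : (c : ℕ) = l := (Finset.mem_insert.mp c.2).resolve_right (fun hc => h hc)
      exact congrArg f (Subtype.ext hcl.symm)
  · -- right inverse
    rintro ⟨⟨U, S⟩, hU, hgc, himg⟩
    apply Subtype.ext
    simp only
    refine Prod.ext ?_ ?_
    · simp only
      by_cases h : l ∈ I
      · rw [dif_pos h]
        have hmem := S.choose_mem (fun x => x.1 = l) (hchoose (U, S) ⟨hgc, himg⟩ _ h)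
        have hprop := S.choose_property (fun x => x.1 = l) (hchoose (U, S) ⟨hgc, himg⟩ _ h)
        obtain ⟨-, hcard, hle⟩ := hgc.1 _ hmem
        rw [hprop] at hcard
        exact (Subgroup.eq_of_le_of_card_ge hle (by rw [hcard, hU])).symm
      · rw [dif_neg h]
    · simp only
      ext x
      simp only [Finset.mem_image, Finset.mem_attach, true_and]
      constructor
      · rintro ⟨d, rfl⟩
        have hd : (d : ℕ) ∈ I := d.2
        rw [dif_pos hd]
        have hmem := S.choose_mem (fun x => x.1 = (d : ℕ)) (hchoose (U, S) ⟨hgc, himg⟩ _ hd)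
        have hprop := S.choose_property (fun x => x.1 = (d : ℕ)) (hchoose (U, S) ⟨hgc, himg⟩ _ hd)
        have : ((d : ℕ), (S.choose (fun x => x.1 = (d : ℕ))
            (hchoose (U, S) ⟨hgc, himg⟩ _ hd)).2) = S.choose (fun x => x.1 = (d : ℕ))
            (hchoose (U, S) ⟨hgc, himg⟩ _ hd) := Prod.ext hprop.symm rfl
        rw [this]
        exact hmem
      · intro hx
        have hx1 : x.1 ∈ I := by
          rw [← himg]
          exact Finset.mem_image_of_mem Prod.fst hx
        refine ⟨⟨x.1, hx1⟩, ?_⟩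
        rw [dif_pos hx1]
        have hmem := S.choose_mem (fun y => y.1 = x.1) (hchoose (U, S) ⟨hgc, himg⟩ _ hx1)
        have hprop := S.choose_property (fun y => y.1 = x.1) (hchoose (U, S) ⟨hgc, himg⟩ _ hx1)
        have : S.choose (fun y => y.1 = x.1) (hchoose (U, S) ⟨hgc, himg⟩ _ hx1) = x :=
          huniq _ _ hgc _ hmem _ hx hprop
        rw [this]

lemma count_M_of_chain [Finite G] (p t n s k : ℕ) (hp : p.Prime) (hG : Nat.card G = p ^ t * n)
    (hs : s ≤ t) (hks : k ≤ s) (U : Subgroup G) (S : Finset (ℕ × Subgroup G)) (I : Finset ℕ)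
    (hkI : k ∈ I) (hgc : goodChain p s k U S) (himg : S.image Prod.fst = I) :
    Nat.card {M : Set G //
        ((1 : G) ∈ M ∧ Nat.card M = p ^ s) ∧ ∀ x ∈ S, x.2 ≤ MulAction.stabilizer G M}
      = (p ^ (t - s + I.min' ⟨k, hkI⟩) * n - 1).choose (p ^ (I.min' ⟨k, hkI⟩) - 1) := by
  set c₀ := I.min' ⟨k, hkI⟩ with hc₀
  have hc₀I : c₀ ∈ I := I.min'_mem _
  have hc₀k : c₀ ≤ k := I.min'_le k hkI
  obtain ⟨x₀, hx₀S, hx₀1⟩ := Finset.mem_image.mp (himg ▸ hc₀I)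
  have hcard : Nat.card x₀.2 = p ^ (s - c₀) := by
    have := (hgc.1 x₀ hx₀S).2.1
    rw [hx₀1] at this
    exact this
  have hiff : ∀ M : Set G, (∀ x ∈ S, x.2 ≤ MulAction.stabilizer G M)
      ↔ x₀.2 ≤ MulAction.stabilizer G M := by
    intro M
    constructor
    · intro h; exact h x₀ hx₀S
    · intro h x hx
      have hc₀x : c₀ ≤ x.1 := by
        apply I.min'_le
        rw [← himg]
        exact Finset.mem_image_of_mem Prod.fst hx
      exact le_trans (hgc.2.2 x₀ hx₀S x hx (by rw [hx₀1]; exact hc₀x)) h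
  have hps : p ^ s = Nat.card x₀.2 * p ^ c₀ := by
    rw [hcard, ← pow_add]
    congr 1
    omega
  have h1 : Nat.card {M : Set G //
        ((1 : G) ∈ M ∧ Nat.card M = p ^ s) ∧ ∀ x ∈ S, x.2 ≤ MulAction.stabilizer G M}
      = Nat.card {M : Set G //
        1 ∈ M ∧ Nat.card M = Nat.card x₀.2 * p ^ c₀ ∧ x₀.2 ≤ MulAction.stabilizer G M} := by
    apply Nat.card_congr
    apply Equiv.subtypeEquivRight
    intro M
    rw [← hps, hiff M]
    tauto
  rw [h1, count_sets x₀.2 (p ^ c₀) (pow_pos hp.pos _)]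
  have hq : Nat.card (G ⧸ x₀.2) = p ^ (t - s + c₀) * n := by
    have h2 := Subgroup.card_eq_card_quotient_mul_card_subgroup x₀.2
    rw [hG, hcard] at h2
    have h3 : p ^ t * n = p ^ (t - s + c₀) * n * p ^ (s - c₀) := by
      rw [mul_assoc, mul_comm n, ← mul_assoc, ← pow_add]
      congr 2
      omega
    rw [h3] at h2
    exact (Nat.eq_of_mul_eq_mul_right (pow_pos hp.pos _) h2.symm)
  rw [hq]

lemma involution_sum [Finite G] (p s k j : ℕ) (hp : p.Prime) (hk : k ≤ s) (hj : j ≤ s)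
    (U T : Subgroup G) (hT : Nat.card T = p ^ (s - j)) :
    ∀ (𝒮 : Finset (Finset (ℕ × Subgroup G))), (∀ S, S ∈ 𝒮 ↔ goodGraph p s k U T S) →
    ∑ S ∈ 𝒮, (-1 : ℤ) ^ (S.card + 1)
      = if U ≤ T ∧ Nat.card T = p ^ (s - k) then 1 else 0 := by
  classical
  intro 𝒮 h𝒮
  have hp1 : 1 < p := hp.one_lt
  have hpow : ∀ a b : ℕ, p ^ a ∣ p ^ b → a ≤ b := fun a b h =>
    (Nat.pow_dvd_pow_iff_le_right hp1).mp h
  by_cases hUT : U ≤ T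
  · by_cases hjk : j = k
    · subst hjk
      -- 𝒮 = {{(j, T)}}
      rw [if_pos ⟨hUT, hT⟩]
      have h1 : 𝒮 = {{(j, T)}} := by
        apply Finset.ext
        intro S
        rw [h𝒮, Finset.mem_singleton]
        constructor
        · rintro ⟨ha, ⟨V, hV⟩, hc⟩
          have key : ∀ x ∈ S, x = (j, T) := by
            rintro ⟨c, W⟩ hx
            obtain ⟨hck, hcard, hUW, hWT⟩ := ha _ hx
            have hdvd : Nat.card W ∣ Nat.card T := Subgroup.card_dvd_of_le hWT
            rw [hcard, hT] at hdvd
            have : s - c ≤ s - j := hpow _ _ hdvd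
            have hcj : c = j := by omega
            subst hcj
            have : W = T := Subgroup.eq_of_le_of_card_ge hWT (by rw [hcard, hT])
            rw [this]
          apply Finset.eq_singleton_iff_unique_mem.mpr
          exact ⟨key (j, V) hV ▸ hV, key⟩
        · rintro rfl
          refine ⟨?_, ⟨T, Finset.mem_singleton_self _⟩, ?_⟩
          · rintro x hx
            rw [Finset.mem_singleton] at hx
            subst hx
            exact ⟨le_refl _, hT, hUT, le_refl _⟩
          · intro x hx y hy _
            rw [Finset.mem_singleton] at hx hy
            subst hx; subst hy
            exact le_refl _
      rw [h1]
      simp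
    · -- j ≠ k : answer is 0
      have hne : ¬ (U ≤ T ∧ Nat.card T = p ^ (s - k)) := by
        rintro ⟨-, hTk⟩
        rw [hT] at hTk
        have := Nat.pow_right_injective hp.two_le hTk
        omega
      rw [if_neg hne]
      rcases lt_or_gt_of_ne hjk with hjlt | hjgt
      · -- j < k : involution toggling (j, T)
        have claimA : ∀ S, goodGraph p s k U T S → ∀ V', (j, V') ∈ S → V' = T := by
          rintro S ⟨ha, -, -⟩ V' hV'
          obtain ⟨-, hcard, -, hWT⟩ := ha _ hV'
          exact Subgroup.eq_of_le_of_card_ge hWT (by rw [hcard, hT])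
        refine Finset.sum_involution
          (fun S _ => if (j, T) ∈ S then S.erase (j, T) else insert (j, T) S) ?_ ?_ ?_ ?_
        · intro S hS
          by_cases hmem : (j, T) ∈ S
          · simp only [hmem, if_true]
            rw [Finset.card_erase_of_mem hmem]
            have hc : S.card ≠ 0 := Finset.card_ne_zero_of_mem hmem
            have : S.card - 1 + 1 = S.card := by omega
            rw [this, pow_succ]
            ring
          · simp only [hmem, if_false]
            rw [Finset.card_insert_of_notMem hmem]
            rw [show S.card + 1 + 1 = S.card + 2 by omega, pow_add, pow_add]
            ring
        · intro S hS _
          by_cases hmem : (j, T) ∈ S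
          · simp only [hmem, if_true]
            intro h
            apply Finset.notMem_erase (j, T) S
            rw [h]
            exact hmem
          · simp only [hmem, if_false]
            intro h
            apply hmem
            rw [← h]
            exact Finset.mem_insert_self (j, T) S
        · intro S hS
          rw [h𝒮] at hS ⊢
          obtain ⟨ha, ⟨V, hV⟩, hc⟩ := hS
          by_cases hmem : (j, T) ∈ S
          · simp only [hmem, if_true]
            refine ⟨fun x hx => ha x (Finset.mem_of_mem_erase hx),
              ⟨V, Finset.mem_erase.mpr ⟨by simp [Prod.ext_iff]; omega, hV⟩⟩,
              fun x hx y hy => hc x (Finset.mem_of_mem_erase hx) y (Finset.mem_of_mem_erase hy)⟩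
          · simp only [hmem, if_false]
            refine ⟨?_, ⟨V, Finset.mem_insert_of_mem hV⟩, ?_⟩
            · intro x hx
              rcases Finset.mem_insert.mp hx with rfl | hx
              · exact ⟨le_of_lt hjlt, by rw [hT], hUT, le_refl _⟩
              · exact ha x hx
            · intro x hx y hy hxy
              rcases Finset.mem_insert.mp hx with rfl | hx' <;>
                rcases Finset.mem_insert.mp hy with rfl | hy'
              · exact le_refl _
              · exact (ha y hy').2.2.2
              · -- y = (j,T), x ∈ S, x.1 ≤ j : show T ≤ x.2
                obtain ⟨hxk, hxcard, hUx, hxT⟩ := ha x hx'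
                have hdvd : Nat.card x.2 ∣ Nat.card T := Subgroup.card_dvd_of_le hxT
                rw [hxcard, hT] at hdvd
                have h1 : s - x.1 ≤ s - j := hpow _ _ hdvd
                have hxj : x.1 = j := by
                  simp only at hxy
                  omega
                have : x.2 = T :=
                  Subgroup.eq_of_le_of_card_ge hxT (by rw [hxcard, hT, hxj])
                rw [this]
              · exact hc x hx' y hy' hxy
        · intro S hS
          by_cases hmem : (j, T) ∈ S
          · simp only [hmem, if_true, Finset.notMem_erase, if_false]
            exact Finset.insert_erase hmem
          · simp only [hmem, if_false, Finset.mem_insert_self, if_true]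
            exact Finset.erase_insert hmem
      · -- j > k : no good graphs
        have hempty : 𝒮 = ∅ := by
          apply Finset.eq_empty_iff_forall_notMem.mpr
          intro S hS
          rw [h𝒮] at hS
          obtain ⟨ha, ⟨V, hV⟩, -⟩ := hS
          obtain ⟨-, hcard, -, hVT⟩ := ha _ hV
          have hdvd : Nat.card V ∣ Nat.card T := Subgroup.card_dvd_of_le hVT
          rw [hcard, hT] at hdvd
          have := hpow _ _ hdvd
          omega
        rw [hempty, Finset.sum_empty]
  · rw [if_neg (fun h => hUT h.1)]
    have hempty : 𝒮 = ∅ := by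
      apply Finset.eq_empty_iff_forall_notMem.mpr
      intro S hS
      rw [h𝒮] at hS
      obtain ⟨ha, ⟨V, hV⟩, -⟩ := hS
      obtain ⟨-, -, hUV, hVT⟩ := ha _ hV
      exact hUT (le_trans hUV hVT)
    rw [hempty, Finset.sum_empty]

lemma stepB [Fintype G] (p t n s l k : ℕ) (hp : p.Prime)
    (hG : Nat.card G = p ^ t * n) (hs : s ≤ t) (hl : l ≤ s) (hk : k ≤ l)
    (I : Finset ℕ) (hI : I ⊆ Finset.range (k + 1)) (hkI : k ∈ I) :
    bCoeff p t s n (I.min' ⟨k, hkI⟩) * (chainCount G p s (insert l I) : ℤ)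
      = ∑ U ∈ Finset.univ.filter (fun U : Subgroup G => Nat.card U = p ^ (s - l)),
        ∑ M ∈ Finset.univ.filter (fun M : Set G => (1 : G) ∈ M ∧ Nat.card M = p ^ s),
          (((((Finset.range (k + 1)) ×ˢ (Finset.univ : Finset (Subgroup G))).powerset).filter
            (fun S => goodGraph p s k U (MulAction.stabilizer G M) S ∧
              S.image Prod.fst = I)).card : ℤ) := by
  have hks : k ≤ s := le_trans hk hl
  set amb : Finset (Finset (ℕ × Subgroup G)) :=
    ((Finset.range (k + 1)) ×ˢ (Finset.univ : Finset (Subgroup G))).powerset with hamb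
  have hambmem : ∀ (U : Subgroup G) (S : Finset (ℕ × Subgroup G)),
      goodChain p s k U S → S ∈ amb := by
    intro U S hgc
    rw [hamb, Finset.mem_powerset]
    intro x hx
    rw [Finset.mem_product, Finset.mem_range]
    exact ⟨by have := (hgc.1 x hx).1; omega, Finset.mem_univ _⟩
  -- the chain count as a finset card
  have hcc : chainCount G p s (insert l I)
      = (((Finset.univ : Finset (Subgroup G)) ×ˢ amb).filter
          (fun q => Nat.card q.1 = p ^ (s - l) ∧ goodChain p s k q.1 q.2 ∧
            q.2.image Prod.fst = I)).card := by
    rw [chainCount_eq_graphs p s l k hk hl I hI hkI]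
    apply card_subtype_eq_filter
    rintro ⟨U, S⟩ ⟨-, hgc, -⟩
    rw [Finset.mem_product]
    exact ⟨Finset.mem_univ _, hambmem U S hgc⟩
  -- per-q count of M's
  have hcM : ∀ (U : Subgroup G) (S : Finset (ℕ × Subgroup G)),
      goodChain p s k U S → S.image Prod.fst = I →
      ((Finset.univ.filter (fun M : Set G => (1 : G) ∈ M ∧ Nat.card M = p ^ s)).filter
        (fun M => ∀ x ∈ S, x.2 ≤ MulAction.stabilizer G M)).card
        = (p ^ (t - s + I.min' ⟨k, hkI⟩) * n - 1).choose (p ^ (I.min' ⟨k, hkI⟩) - 1) := by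
    intro U S hgc himg
    rw [← count_M_of_chain p t n s k hp hG hs hks U S I hkI hgc himg]
    rw [Finset.filter_filter]
    rw [← card_subtype_eq_filter Finset.univ _ (fun x _ => Finset.mem_univ x)]
  rw [hcc]
  calc bCoeff p t s n (I.min' ⟨k, hkI⟩) * ((((Finset.univ : Finset (Subgroup G)) ×ˢ amb).filter
          (fun q => Nat.card q.1 = p ^ (s - l) ∧ goodChain p s k q.1 q.2 ∧
            q.2.image Prod.fst = I)).card : ℤ)
      = ∑ q ∈ ((Finset.univ : Finset (Subgroup G)) ×ˢ amb).filter
          (fun q => Nat.card q.1 = p ^ (s - l) ∧ goodChain p s k q.1 q.2 ∧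
            q.2.image Prod.fst = I), bCoeff p t s n (I.min' ⟨k, hkI⟩) := by
        rw [Finset.sum_const, nsmul_eq_mul, mul_comm]
    _ = ∑ q ∈ ((Finset.univ : Finset (Subgroup G)) ×ˢ amb).filter
          (fun q => Nat.card q.1 = p ^ (s - l) ∧ goodChain p s k q.1 q.2 ∧
            q.2.image Prod.fst = I),
          (((Finset.univ.filter (fun M : Set G => (1 : G) ∈ M ∧ Nat.card M = p ^ s)).filter
            (fun M => ∀ x ∈ q.2, x.2 ≤ MulAction.stabilizer G M)).card : ℤ) := by
        apply Finset.sum_congr rfl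
        rintro ⟨U, S⟩ hq
        rw [Finset.mem_filter] at hq
        obtain ⟨-, -, hgc, himg⟩ := hq
        rw [hcM U S hgc himg]
        rfl
    _ = ∑ U : Subgroup G, ∑ S ∈ amb,
          (if Nat.card U = p ^ (s - l) ∧ goodChain p s k U S ∧ S.image Prod.fst = I then
            (((Finset.univ.filter (fun M : Set G => (1 : G) ∈ M ∧ Nat.card M = p ^ s)).filter
              (fun M => ∀ x ∈ S, x.2 ≤ MulAction.stabilizer G M)).card : ℤ) else 0) := by
        rw [Finset.sum_filter, Finset.sum_product]
    _ = ∑ U : Subgroup G, (if Nat.card U = p ^ (s - l) then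
          ∑ M ∈ Finset.univ.filter (fun M : Set G => (1 : G) ∈ M ∧ Nat.card M = p ^ s),
            ∑ S ∈ amb, (if goodGraph p s k U (MulAction.stabilizer G M) S ∧
              S.image Prod.fst = I then (1 : ℤ) else 0) else 0) := by
        apply Finset.sum_congr rfl
        intro U _
        by_cases hA : Nat.card U = p ^ (s - l)
        · rw [if_pos hA]
          simp only [hA, true_and]
          rw [Finset.sum_comm]
          apply Finset.sum_congr rfl
          intro S _
          by_cases hB : goodChain p s k U S ∧ S.image Prod.fst = I
          · rw [if_pos hB]
            rw [Finset.card_filter]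
            push_cast
            apply Finset.sum_congr rfl
            intro M _
            by_cases hC : ∀ x ∈ S, x.2 ≤ MulAction.stabilizer G M
            · rw [if_pos hC, if_pos]
              rw [goodGraph_iff]
              exact ⟨⟨hB.1, hC⟩, hB.2⟩
            · rw [if_neg hC, if_neg]
              rw [goodGraph_iff]
              tauto
          · rw [if_neg hB]
            rw [eq_comm]
            apply Finset.sum_eq_zero
            intro M _
            rw [if_neg]
            rw [goodGraph_iff]
            tauto
        · rw [if_neg hA]
          apply Finset.sum_eq_zero
          intro S _
          rw [if_neg]
          exact fun h => hA h.1
    _ = ∑ U ∈ Finset.univ.filter (fun U : Subgroup G => Nat.card U = p ^ (s - l)),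
          ∑ M ∈ Finset.univ.filter (fun M : Set G => (1 : G) ∈ M ∧ Nat.card M = p ^ s),
            ∑ S ∈ amb, (if goodGraph p s k U (MulAction.stabilizer G M) S ∧
              S.image Prod.fst = I then (1 : ℤ) else 0) := by
        rw [Finset.sum_filter]
    _ = ∑ U ∈ Finset.univ.filter (fun U : Subgroup G => Nat.card U = p ^ (s - l)),
          ∑ M ∈ Finset.univ.filter (fun M : Set G => (1 : G) ∈ M ∧ Nat.card M = p ^ s),
            ((amb.filter (fun S => goodGraph p s k U (MulAction.stabilizer G M) S ∧
              S.image Prod.fst = I)).card : ℤ) := by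
        apply Finset.sum_congr rfl
        intro U _
        apply Finset.sum_congr rfl
        intro M _
        rw [Finset.card_filter]
        push_cast
        rfl

end AuxKulshammer

/-- Let `l ∈ [0, s]` and `k ∈ [0, l]`.  The number of pairs `(U, M)`, where `U ≤ G`
with `|U| = p^(s-l)`, `M ⊆ G` with `1 ∈ M`, `|M| = p^s`, `|Stab(M)| = p^(s-k)` and
`M` a union of right cosets of `U`, equals
`∑_{I ⊆ [0,k], k ∈ I} (-1)^(|I|+1) · b(min I) · N(s - (I ∪ {l}))`. -/
theorem card_pairs_eq_alternating_sum {G : Type*} [Group G] [Finite G]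
    (p t n s l k : ℕ) (hp : p.Prime) (hG : Nat.card G = p ^ t * n) (hn : ¬ p ∣ n)
    (hs : s ≤ t) (hl : l ≤ s) (hk : k ≤ l) :
    (Nat.card {x : Subgroup G × Set G //
        Nat.card x.1 = p ^ (s - l) ∧ (1 : G) ∈ x.2 ∧ Nat.card x.2 = p ^ s ∧
        Nat.card (MulAction.stabilizer G x.2) = p ^ (s - k) ∧
        ∃ S : Set G, x.2 = ⋃ g ∈ S, (x.1 : Set G) * {g}} : ℤ)
      = ∑ I ∈ ((Finset.range (k + 1)).powerset.filter (fun I => k ∈ I)).attach,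
          (-1 : ℤ) ^ (I.1.card + 1) *
            bCoeff p t s n (I.1.min' ⟨k, (Finset.mem_filter.mp I.2).2⟩) *
            (chainCount G p s (insert l I.1) : ℤ) := by
  classical
  letI := Fintype.ofFinite G
  set F : Finset (Finset ℕ) := (Finset.range (k + 1)).powerset.filter (fun I => k ∈ I) with hF
  have hFmem : ∀ I ∈ F, I ⊆ Finset.range (k + 1) ∧ k ∈ I := by
    intro I hI
    rw [hF, Finset.mem_filter, Finset.mem_powerset] at hI
    exact hI
  set amb : Finset (Finset (ℕ × Subgroup G)) :=
    ((Finset.range (k + 1)) ×ˢ (Finset.univ : Finset (Subgroup G))).powerset with hamb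
  set 𝒰 : Finset (Subgroup G) :=
    Finset.univ.filter (fun U : Subgroup G => Nat.card U = p ^ (s - l)) with h𝒰
  set 𝓜 : Finset (Set G) :=
    Finset.univ.filter (fun M : Set G => (1 : G) ∈ M ∧ Nat.card M = p ^ s) with h𝓜
  -- Left side equals the middle double sum
  have hL : (Nat.card {x : Subgroup G × Set G //
        Nat.card x.1 = p ^ (s - l) ∧ (1 : G) ∈ x.2 ∧ Nat.card x.2 = p ^ s ∧
        Nat.card (MulAction.stabilizer G x.2) = p ^ (s - k) ∧
        ∃ S : Set G, x.2 = ⋃ g ∈ S, (x.1 : Set G) * {g}} : ℤ)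
      = ∑ U ∈ 𝒰, ∑ M ∈ 𝓜,
          (if U ≤ MulAction.stabilizer G M ∧
            Nat.card (MulAction.stabilizer G M) = p ^ (s - k) then (1 : ℤ) else 0) := by
    have e1 : Nat.card {x : Subgroup G × Set G //
        Nat.card x.1 = p ^ (s - l) ∧ (1 : G) ∈ x.2 ∧ Nat.card x.2 = p ^ s ∧
        Nat.card (MulAction.stabilizer G x.2) = p ^ (s - k) ∧
        ∃ S : Set G, x.2 = ⋃ g ∈ S, (x.1 : Set G) * {g}}
      = Nat.card {x : Subgroup G × Set G //
        Nat.card x.1 = p ^ (s - l) ∧ (((1 : G) ∈ x.2 ∧ Nat.card x.2 = p ^ s) ∧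
        (x.1 ≤ MulAction.stabilizer G x.2 ∧
          Nat.card (MulAction.stabilizer G x.2) = p ^ (s - k)))} := by
      apply Nat.card_congr
      apply Equiv.subtypeEquivRight
      intro x
      have := exists_union_iff x.1 x.2
      tauto
    rw [e1, card_subtype_eq_filter Finset.univ _ (fun x _ => Finset.mem_univ x)]
    rw [Finset.card_filter]
    push_cast
    rw [Fintype.sum_prod_type]
    rw [h𝒰, Finset.sum_filter]
    apply Finset.sum_congr rfl
    intro U _
    by_cases hA : Nat.card U = p ^ (s - l)
    · rw [if_pos hA, h𝓜, Finset.sum_filter]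
      apply Finset.sum_congr rfl
      intro M _
      by_cases hB : (1 : G) ∈ M ∧ Nat.card M = p ^ s
      · rw [if_pos hB]
        by_cases hJ : U ≤ MulAction.stabilizer G M ∧
            Nat.card (MulAction.stabilizer G M) = p ^ (s - k)
        · rw [if_pos ⟨hA, hB, hJ⟩, if_pos hJ]
        · rw [if_neg (fun h => hJ h.2.2), if_neg hJ]
      · rw [if_neg (fun h => hB h.2.1), if_neg hB]
    · rw [if_neg hA]
      apply Finset.sum_eq_zero
      intro M _
      rw [if_neg (fun h => hA h.1)]
  rw [hL]
  -- Right side equals the same double sum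
  have hR : ∀ I ∈ F.attach,
      (-1 : ℤ) ^ (I.1.card + 1) *
        bCoeff p t s n (I.1.min' ⟨k, (Finset.mem_filter.mp I.2).2⟩) *
        (chainCount G p s (insert l I.1) : ℤ)
      = ∑ U ∈ 𝒰, ∑ M ∈ 𝓜,
          (-1 : ℤ) ^ (I.1.card + 1) *
            ((amb.filter (fun S => goodGraph p s k U (MulAction.stabilizer G M) S ∧
              S.image Prod.fst = I.1)).card : ℤ) := by
    intro I _
    obtain ⟨hIsub, hIk⟩ := hFmem I.1 I.2
    rw [mul_assoc, stepB p t n s l k hp hG hs hl hk I.1 hIsub hIk]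
    rw [Finset.mul_sum]
    apply Finset.sum_congr rfl
    intro U _
    rw [Finset.mul_sum]
  rw [Finset.sum_congr rfl hR]
  symm
  rw [Finset.sum_comm]
  apply Finset.sum_congr rfl
  intro U hU
  rw [Finset.sum_comm]
  apply Finset.sum_congr rfl
  intro M hM
  -- now fixed U, M
  rw [h𝒰, Finset.mem_filter] at hU
  rw [h𝓜, Finset.mem_filter] at hM
  obtain ⟨-, hUcard⟩ := hU
  obtain ⟨-, hM1, hMcard⟩ := hM
  set T := MulAction.stabilizer G M with hT
  -- the inner sum over I
  have inner1 : ∑ I ∈ F.attach,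
      (-1 : ℤ) ^ (I.1.card + 1) *
        ((amb.filter (fun S => goodGraph p s k U T S ∧ S.image Prod.fst = I.1)).card : ℤ)
      = ∑ I ∈ F, (-1 : ℤ) ^ (I.card + 1) *
        ((amb.filter (fun S => goodGraph p s k U T S ∧ S.image Prod.fst = I)).card : ℤ) :=
    Finset.sum_attach F (fun J => (-1 : ℤ) ^ (J.card + 1) *
      ((amb.filter (fun S => goodGraph p s k U T S ∧ S.image Prod.fst = J)).card : ℤ))
  rw [inner1]
  -- convert each term to a sum over the fiber
  have inner2 : ∀ I ∈ F,
      (-1 : ℤ) ^ (I.card + 1) *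
        ((amb.filter (fun S => goodGraph p s k U T S ∧ S.image Prod.fst = I)).card : ℤ)
      = ∑ S ∈ (amb.filter (goodGraph p s k U T)).filter (fun S => S.image Prod.fst = I),
          (-1 : ℤ) ^ (S.card + 1) := by
    intro I hI
    rw [Finset.filter_filter]
    have : ∀ S ∈ amb.filter (fun S => goodGraph p s k U T S ∧ S.image Prod.fst = I),
        (-1 : ℤ) ^ (S.card + 1) = (-1 : ℤ) ^ (I.card + 1) := by
      intro S hS
      rw [Finset.mem_filter] at hS
      obtain ⟨-, hgg, himg⟩ := hS
      have hinj : Set.InjOn Prod.fst (S : Set (ℕ × Subgroup G)) := by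
        intro x hx y hy hxy
        have h1 := hgg.2.2 x hx y hy (le_of_eq hxy)
        have h2 := hgg.2.2 y hy x hx (le_of_eq hxy.symm)
        exact Prod.ext hxy (le_antisymm h2 h1)
      have : I.card = S.card := by
        rw [← himg, Finset.card_image_of_injOn hinj]
      rw [this]
    rw [Finset.sum_congr rfl this, Finset.sum_const, nsmul_eq_mul, mul_comm]
  rw [Finset.sum_congr rfl inner2]
  -- fiberwise summation
  have maps : ∀ S ∈ amb.filter (goodGraph p s k U T), S.image Prod.fst ∈ F := by
    intro S hS
    rw [Finset.mem_filter] at hS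
    obtain ⟨-, hgg⟩ := hS
    rw [hF, Finset.mem_filter, Finset.mem_powerset]
    constructor
    · intro c hc
      obtain ⟨x, hx, rfl⟩ := Finset.mem_image.mp hc
      rw [Finset.mem_range]
      have := (hgg.1 x hx).1
      omega
    · obtain ⟨V, hV⟩ := hgg.2.1
      exact Finset.mem_image.mpr ⟨(k, V), hV, rfl⟩
  rw [Finset.sum_fiberwise_of_maps_to maps]
  -- apply the involution lemma
  have hdvd : Nat.card T ∣ p ^ s := by
    rw [← hMcard]
    exact card_dvd_of_le_stab T M le_rfl
  obtain ⟨d, hd, hTd⟩ := (Nat.dvd_prime_pow hp).mp hdvd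
  have happ := involution_sum p s k (s - d) hp (le_trans hk hl) (by omega) U T
    (by rw [hTd]; congr 1; omega)
    (amb.filter (goodGraph p s k U T)) ?_
  · rw [happ]
  · intro S
    rw [Finset.mem_filter]
    constructor
    · exact fun h => h.2
    · intro h
      refine ⟨?_, h⟩
      rw [hamb, Finset.mem_powerset]
      intro x hx
      rw [Finset.mem_product, Finset.mem_range]
      exact ⟨by have := (h.1 x hx).1; omega, Finset.mem_univ _⟩
end
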